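/- arXiv:2106.07231 — 5 statements merged into one kernel-verified Lean document; each statement's English description precedes it below -/
import Mathlib

section
/- The derived subgroup G' of G is the cyclic subgroup generated by z, and it has order 4. -/
namespace MIP

/-- Relators of the group `G`. -/
def grels (n m : ℕ) : Set (FreeGroup (Fin 3)) :=
  {(FreeGroup.of 2)⁻¹ * ((FreeGroup.of 1)⁻¹ * (FreeGroup.of 0)⁻¹ * FreeGroup.of 1 * FreeGroup.of 0),
   FreeGroup.of 0 ^ (2 ^ n), FreeGroup.of 1 ^ (2 ^ m), FreeGroup.of 2 ^ 4,
   (FreeGroup.of 0)⁻¹ * FreeGroup.of 2 * FreeGroup.of 0 * FreeGroup.of 2,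
   (FreeGroup.of 1)⁻¹ * FreeGroup.of 2 * FreeGroup.of 1 * FreeGroup.of 2}

/-- Relators of the group `H`. -/
def hrels (n m : ℕ) : Set (FreeGroup (Fin 3)) :=
  {(FreeGroup.of 2)⁻¹ * ((FreeGroup.of 1)⁻¹ * (FreeGroup.of 0)⁻¹ * FreeGroup.of 1 * FreeGroup.of 0),
   FreeGroup.of 0 ^ (2 ^ n), FreeGroup.of 1 ^ (2 ^ m), FreeGroup.of 2 ^ 4,
   (FreeGroup.of 0)⁻¹ * FreeGroup.of 2 * FreeGroup.of 0 * FreeGroup.of 2,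
   (FreeGroup.of 1)⁻¹ * FreeGroup.of 2 * FreeGroup.of 1 * (FreeGroup.of 2)⁻¹}

abbrev GG (n m : ℕ) := PresentedGroup (grels n m)
abbrev HH (n m : ℕ) := PresentedGroup (hrels n m)

def gx (n m : ℕ) : GG n m := PresentedGroup.of 0
def gy (n m : ℕ) : GG n m := PresentedGroup.of 1
def gz (n m : ℕ) : GG n m := PresentedGroup.of 2
def ha (n m : ℕ) : HH n m := PresentedGroup.of 0
def hb (n m : ℕ) : HH n m := PresentedGroup.of 1
def hc (n m : ℕ) : HH n m := PresentedGroup.of 2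

/-! ### A concrete finite permutation model of the relations of `G` -/

/-- The image of `x` in a finite permutation model. -/
def KX : Equiv.Perm (Fin 8) :=
  ⟨![4, 7, 6, 5, 0, 3, 2, 1], ![4, 7, 6, 5, 0, 3, 2, 1], by decide, by decide⟩

/-- The image of `y` in a finite permutation model. -/
def KY : Equiv.Perm (Fin 8) :=
  ⟨![0, 3, 2, 1, 7, 6, 5, 4], ![0, 3, 2, 1, 7, 6, 5, 4], by decide, by decide⟩

/-- The image of `z` in a finite permutation model. -/
def KZ : Equiv.Perm (Fin 8) :=
  ⟨![3, 0, 1, 2, 7, 4, 5, 6], ![1, 2, 3, 0, 5, 6, 7, 4], by decide, by decide⟩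

/-- The map sending the generators into the permutation model. -/
def kf : Fin 3 → Equiv.Perm (Fin 8)
  | 0 => KX
  | 1 => KY
  | 2 => KZ

lemma kf_rels (n m : ℕ) (hn : 1 ≤ n) (hm : 1 ≤ m) :
    ∀ r ∈ grels n m, FreeGroup.lift kf r = 1 := by
  have hpow : ∀ (w : Equiv.Perm (Fin 8)) (k : ℕ), 1 ≤ k → w ^ 2 = 1 → w ^ 2 ^ k = 1 := by
    intro w k hk hw
    obtain ⟨j, rfl⟩ := Nat.exists_eq_add_of_le hk
    rw [pow_add, pow_one, pow_mul, hw, one_pow]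
  intro r hr
  simp only [grels, Set.mem_insert_iff, Set.mem_singleton_iff] at hr
  rcases hr with rfl | rfl | rfl | rfl | rfl | rfl
  · simp only [map_mul, map_inv, FreeGroup.lift_apply_of]
    decide
  · rw [map_pow, FreeGroup.lift_apply_of]
    exact hpow _ n hn (by decide)
  · rw [map_pow, FreeGroup.lift_apply_of]
    exact hpow _ m hm (by decide)
  · rw [map_pow, FreeGroup.lift_apply_of]
    decide
  · simp only [map_mul, map_inv, FreeGroup.lift_apply_of]
    decide
  · simp only [map_mul, map_inv, FreeGroup.lift_apply_of]
    decide

/-! ### Relations holding in `G` -/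

lemma grel_one {n m : ℕ} {r : FreeGroup (Fin 3)} (hr : r ∈ grels n m) :
    PresentedGroup.mk (grels n m) r = 1 :=
  (QuotientGroup.eq_one_iff r).mpr (Subgroup.subset_normalClosure hr)

lemma grel1 (n m : ℕ) :
    (gz n m)⁻¹ * ((gy n m)⁻¹ * (gx n m)⁻¹ * gy n m * gx n m) = 1 := by
  have h := grel_one (n := n) (m := m) (Set.mem_insert _ _)
  simp only [map_mul, map_inv] at h
  exact h

/-- `z = [y, x]` in `G`. -/
lemma grel1' (n m : ℕ) :
    gz n m = (gy n m)⁻¹ * (gx n m)⁻¹ * gy n m * gx n m :=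
  eq_of_inv_mul_eq_one (grel1 n m)

lemma grel4 (n m : ℕ) : (gz n m) ^ 4 = 1 := by
  have h := grel_one (n := n) (m := m)
    (Set.mem_insert_of_mem _ (Set.mem_insert_of_mem _ (Set.mem_insert_of_mem _
      (Set.mem_insert _ _))))
  rw [map_pow] at h
  exact h

lemma grel5 (n m : ℕ) : (gx n m)⁻¹ * gz n m * gx n m * gz n m = 1 := by
  have h := grel_one (n := n) (m := m)
    (Set.mem_insert_of_mem _ (Set.mem_insert_of_mem _ (Set.mem_insert_of_mem _
      (Set.mem_insert_of_mem _ (Set.mem_insert _ _)))))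
  rw [map_mul, map_mul, map_mul, map_inv] at h
  exact h

lemma grel6 (n m : ℕ) : (gy n m)⁻¹ * gz n m * gy n m * gz n m = 1 := by
  have h := grel_one (n := n) (m := m)
    (Set.mem_insert_of_mem _ (Set.mem_insert_of_mem _ (Set.mem_insert_of_mem _
      (Set.mem_insert_of_mem _ (Set.mem_insert_of_mem _ rfl)))))
  rw [map_mul, map_mul, map_mul, map_inv] at h
  exact h

/-! ### `⟨z⟩` is a normal subgroup -/

/-- The subgroup of elements conjugating `z` to `z` or to `z⁻¹`. -/
def conjS (n m : ℕ) : Subgroup (GG n m) where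
  carrier := {g | g * gz n m * g⁻¹ = gz n m ∨ g * gz n m * g⁻¹ = (gz n m)⁻¹}
  one_mem' := Or.inl (by group)
  mul_mem' := by
    rintro a b (ha | ha) (hb | hb)
    · left
      rw [show a * b * gz n m * (a * b)⁻¹ = a * (b * gz n m * b⁻¹) * a⁻¹ by group, hb]
      exact ha
    · right
      rw [show a * b * gz n m * (a * b)⁻¹ = a * (b * gz n m * b⁻¹) * a⁻¹ by group, hb,
        show a * (gz n m)⁻¹ * a⁻¹ = (a * gz n m * a⁻¹)⁻¹ by group, ha]
    · right
      rw [show a * b * gz n m * (a * b)⁻¹ = a * (b * gz n m * b⁻¹) * a⁻¹ by group, hb]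
      exact ha
    · left
      rw [show a * b * gz n m * (a * b)⁻¹ = a * (b * gz n m * b⁻¹) * a⁻¹ by group, hb,
        show a * (gz n m)⁻¹ * a⁻¹ = (a * gz n m * a⁻¹)⁻¹ by group, ha, inv_inv]
  inv_mem' := by
    rintro a (ha | ha)
    · left
      have h' : gz n m = a⁻¹ * gz n m * a := by
        conv_rhs => rw [← ha]
        group
      rw [inv_inv]
      exact h'.symm
    · right
      have h' : gz n m = a⁻¹ * (gz n m)⁻¹ * a := by
        conv_rhs => rw [← ha]
        group
      calc a⁻¹ * gz n m * a⁻¹⁻¹ = (a⁻¹ * (gz n m)⁻¹ * a)⁻¹ := by group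
        _ = (gz n m)⁻¹ := by rw [← h']

lemma conj_gz (n m : ℕ) (g : GG n m) :
    g * gz n m * g⁻¹ = gz n m ∨ g * gz n m * g⁻¹ = (gz n m)⁻¹ := by
  refine PresentedGroup.generated_by _ (conjS n m) ?_ g
  intro j
  fin_cases j
  · -- generator x
    right
    have e : (gx n m)⁻¹ * gz n m * gx n m = (gz n m)⁻¹ :=
      mul_eq_one_iff_eq_inv.mp (grel5 n m)
    have e2 : gx n m * (gz n m)⁻¹ * (gx n m)⁻¹ = gz n m := by
      rw [← e]; group
    calc gx n m * gz n m * (gx n m)⁻¹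
        = (gx n m * (gz n m)⁻¹ * (gx n m)⁻¹)⁻¹ := by group
      _ = (gz n m)⁻¹ := by rw [e2]
  · -- generator y
    right
    have e : (gy n m)⁻¹ * gz n m * gy n m = (gz n m)⁻¹ :=
      mul_eq_one_iff_eq_inv.mp (grel6 n m)
    have e2 : gy n m * (gz n m)⁻¹ * (gy n m)⁻¹ = gz n m := by
      rw [← e]; group
    calc gy n m * gz n m * (gy n m)⁻¹
        = (gy n m * (gz n m)⁻¹ * (gy n m)⁻¹)⁻¹ := by group
      _ = (gz n m)⁻¹ := by rw [e2]
  · -- generator z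
    left
    show gz n m * gz n m * (gz n m)⁻¹ = gz n m
    group

lemma zpowers_gz_normal (n m : ℕ) : (Subgroup.zpowers (gz n m)).Normal := by
  constructor
  intro k hk g
  obtain ⟨j, rfl⟩ := Subgroup.mem_zpowers_iff.mp hk
  have hconj : g * gz n m ^ j * g⁻¹ = (g * gz n m * g⁻¹) ^ j := by
    have h := map_zpow (MulAut.conj g) (gz n m) j
    simp only [MulAut.conj_apply] at h
    exact h
  rw [hconj]
  rcases conj_gz n m g with h | h <;> rw [h]
  · exact Subgroup.zpow_mem_zpowers _ _
  · rw [← zpow_neg_one, ← zpow_mul]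
    exact Subgroup.zpow_mem_zpowers _ _

open scoped commutatorElement

/-! ### The quotient `G/⟨z⟩` is abelian -/

lemma comm_mem_zpowers_gz (n m : ℕ) (g h : GG n m) :
    ⁅g, h⁆ ∈ Subgroup.zpowers (gz n m) := by
  haveI hN : (Subgroup.zpowers (gz n m)).Normal := zpowers_gz_normal n m
  set N := Subgroup.zpowers (gz n m) with hNdef
  let mk : GG n m →* GG n m ⧸ N := QuotientGroup.mk' N
  have hz1 : mk (gz n m) = 1 :=
    (QuotientGroup.eq_one_iff _).mpr (Subgroup.mem_zpowers _)
  -- x and y commute in the quotient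
  have cxy : Commute (mk (gx n m)) (mk (gy n m)) := by
    have h := congrArg mk (grel1' n m)
    rw [map_mul, map_mul, map_mul, map_inv, map_inv, hz1] at h
    have h2 : ⁅(mk (gy n m))⁻¹, (mk (gx n m))⁻¹⁆ = 1 := by
      rw [commutatorElement_def, inv_inv, inv_inv]
      exact h.symm
    have h3 : Commute (mk (gy n m))⁻¹ (mk (gx n m))⁻¹ :=
      commutatorElement_eq_one_iff_commute.mp h2
    have h4 := h3.inv_left.inv_right
    simp only [inv_inv] at h4
    exact h4.symm
  have key : ∀ a b : GG n m, Commute (mk a) (mk b) := by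
    intro a b
    have hmema : a ∈ Subgroup.closure (Set.range (PresentedGroup.of :
        Fin 3 → GG n m)) := by
      rw [PresentedGroup.closure_range_of]; exact Subgroup.mem_top a
    have hmemb : b ∈ Subgroup.closure (Set.range (PresentedGroup.of :
        Fin 3 → GG n m)) := by
      rw [PresentedGroup.closure_range_of]; exact Subgroup.mem_top b
    refine Subgroup.closure_induction₂
      (p := fun u v _ _ => Commute (mk u) (mk v)) ?_ ?_ ?_ ?_ ?_ ?_ ?_ hmema hmemb
    · rintro u v ⟨i, rfl⟩ ⟨j, rfl⟩
      fin_cases i <;> fin_cases j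
      · exact Commute.refl _
      · exact cxy
      · show Commute (mk (gx n m)) (mk (gz n m))
        rw [hz1]; exact Commute.one_right _
      · exact cxy.symm
      · exact Commute.refl _
      · show Commute (mk (gy n m)) (mk (gz n m))
        rw [hz1]; exact Commute.one_right _
      · show Commute (mk (gz n m)) (mk (gx n m))
        rw [hz1]; exact Commute.one_left _
      · show Commute (mk (gz n m)) (mk (gy n m))
        rw [hz1]; exact Commute.one_left _
      · exact Commute.refl _
    · intro u _
      rw [map_one]; exact Commute.one_left _
    · intro u _
      rw [map_one]; exact Commute.one_right _
    · intro u v w _ _ _ h1 h2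
      rw [map_mul]; exact h1.mul_left h2
    · intro u v w _ _ _ h1 h2
      rw [map_mul]; exact h1.mul_right h2
    · intro u v _ _ h1
      rw [map_inv]; exact h1.inv_left
    · intro u v _ _ h1
      rw [map_inv]; exact h1.inv_right
  have : mk ⁅g, h⁆ = 1 := by
    rw [map_commutatorElement]
    exact commutatorElement_eq_one_iff_commute.mpr (key g h)
  exact (QuotientGroup.eq_one_iff _).mp this

/-! ### Main statement -/

/-- The derived subgroup `G'` of `G` is the cyclic subgroup generated by
`z`, and it has order 4. -/
theorem statement_3 (n m : ℕ) (hm : 2 < m) (hmn : m < n) :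
    commutator (GG n m) = Subgroup.zpowers (gz n m) ∧
    Nat.card (commutator (GG n m)) = 4 := by
  have heq : commutator (GG n m) = Subgroup.zpowers (gz n m) := by
    apply le_antisymm
    · rw [commutator_def]
      exact Subgroup.commutator_le.mpr fun g _ h _ => comm_mem_zpowers_gz n m g h
    · rw [Subgroup.zpowers_le, commutator_def]
      have hmem := Subgroup.commutator_mem_commutator
        (Subgroup.mem_top (gy n m)⁻¹) (Subgroup.mem_top (gx n m)⁻¹)
      have : ⁅(gy n m)⁻¹, (gx n m)⁻¹⁆ = gz n m := by
        rw [commutatorElement_def, inv_inv, inv_inv]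
        exact (grel1' n m).symm
      rwa [this] at hmem
  refine ⟨heq, ?_⟩
  rw [heq, Nat.card_zpowers]
  -- order of `z` is 4, via the permutation model
  haveI : Fact (Nat.Prime 2) := ⟨by norm_num⟩
  have hrels := kf_rels n m (by omega) (by omega)
  let φ : GG n m →* Equiv.Perm (Fin 8) := PresentedGroup.toGroup hrels
  have hφz : φ (gz n m) = KZ := PresentedGroup.toGroup.of hrels
  have hKZ : orderOf KZ = 4 := by
    have h4 : orderOf KZ = 2 ^ (1 + 1) :=
      orderOf_eq_prime_pow (by decide) (by decide)
    simpa using h4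
  have hdvd1 : (4 : ℕ) ∣ orderOf (gz n m) := by
    rw [← hKZ, ← hφz]
    exact orderOf_map_dvd φ (gz n m)
  have hdvd2 : orderOf (gz n m) ∣ 4 := orderOf_dvd_of_pow_eq_one (grel4 n m)
  exact Nat.dvd_antisymm hdvd2 hdvd1

end MIP
end

section
/- The derived subgroup H' of H is the cyclic subgroup generated by c, and it has order 4. -/
namespace MIP

/-! ### Auxiliary lemmas -/

lemma mk_rel_one {n m : ℕ} {r : FreeGroup (Fin 3)} (h : r ∈ hrels n m) :
    PresentedGroup.mk (hrels n m) r = 1 :=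
  (QuotientGroup.eq_one_iff r).2 (Subgroup.subset_normalClosure h)

lemma rel_c (n m : ℕ) :
    hc n m = (hb n m)⁻¹ * (ha n m)⁻¹ * hb n m * ha n m := by
  have h := mk_rel_one (n := n) (m := m) (Or.inl rfl)
  simp only [map_mul, map_inv] at h
  rw [inv_mul_eq_one] at h
  exact h

lemma rel_c4 (n m : ℕ) : hc n m ^ 4 = 1 := by
  have h := mk_rel_one (n := n) (m := m)
    (show FreeGroup.of 2 ^ 4 ∈ hrels n m from Or.inr (Or.inr (Or.inr (Or.inl rfl))))
  simp only [map_pow] at h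
  exact h

lemma rel_an (n m : ℕ) : ha n m ^ (2 ^ n) = 1 := by
  have h := mk_rel_one (n := n) (m := m)
    (show FreeGroup.of 0 ^ (2 ^ n) ∈ hrels n m from Or.inr (Or.inl rfl))
  simp only [map_pow] at h
  exact h

lemma rel_ac (n m : ℕ) : (ha n m)⁻¹ * hc n m * ha n m = (hc n m)⁻¹ := by
  have h := mk_rel_one (n := n) (m := m)
    (show (FreeGroup.of 0)⁻¹ * FreeGroup.of 2 * FreeGroup.of 0 * FreeGroup.of 2 ∈ hrels n m from
      Or.inr (Or.inr (Or.inr (Or.inr (Or.inl rfl)))))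
  simp only [map_mul, map_inv] at h
  rw [mul_eq_one_iff_eq_inv] at h
  exact h

lemma rel_bc (n m : ℕ) : (hb n m)⁻¹ * hc n m * hb n m = hc n m := by
  have h := mk_rel_one (n := n) (m := m)
    (show (FreeGroup.of 1)⁻¹ * FreeGroup.of 2 * FreeGroup.of 1 * (FreeGroup.of 2)⁻¹ ∈ hrels n m
      from Or.inr (Or.inr (Or.inr (Or.inr (Or.inr rfl)))))
  simp only [map_mul, map_inv] at h
  rw [mul_inv_eq_one] at h
  exact h

/-- In any group, from `x⁻¹ * y * x = z` derive `x * z * x⁻¹ = y`. -/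
lemma conj_helper {G : Type*} [Group G] {x y z : G} (h : x⁻¹ * y * x = z) :
    x * z * x⁻¹ = y := by rw [← h]; group

lemma conj_inv {G : Type*} [Group G] {x y z : G} (h : x * y * x⁻¹ = z) :
    x * y⁻¹ * x⁻¹ = z⁻¹ := by rw [← h]; group

lemma rel_ac' (n m : ℕ) : ha n m * hc n m * (ha n m)⁻¹ = (hc n m)⁻¹ := by
  have h := conj_inv (conj_helper (rel_ac n m))
  simpa using h

lemma rel_bc' (n m : ℕ) : hb n m * hc n m * (hb n m)⁻¹ = hc n m :=
  conj_helper (rel_bc n m)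

lemma conj_mem_zpowers {G : Type*} [Group G] {g c z : G} (h : g * c * g⁻¹ = z)
    (hz : z ∈ Subgroup.zpowers c) :
    ∀ x ∈ Subgroup.zpowers c, g * x * g⁻¹ ∈ Subgroup.zpowers c := by
  rintro x ⟨k, rfl⟩
  have : g * c ^ k * g⁻¹ = z ^ k := by rw [← h, conj_zpow]
  rw [this]
  exact Subgroup.zpow_mem _ hz k

lemma normalizer_helper {G : Type*} [Group G] {g c z w : G}
    (h1 : g * c * g⁻¹ = z) (h2 : g⁻¹ * c * g = w)
    (hz : z ∈ Subgroup.zpowers c) (hw : w ∈ Subgroup.zpowers c) :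
    g ∈ Subgroup.normalizer (Subgroup.zpowers c : Set G) := by
  rw [Subgroup.mem_normalizer_iff]
  intro x
  constructor
  · exact fun hx => conj_mem_zpowers h1 hz x hx
  · intro hx
    have h2' : g⁻¹ * c * (g⁻¹)⁻¹ = w := by rwa [inv_inv]
    have h3 := conj_mem_zpowers h2' hw _ hx
    rwa [show g⁻¹ * (g * x * g⁻¹) * (g⁻¹)⁻¹ = x by group] at h3

lemma zpowers_hc_normal (n m : ℕ) : (Subgroup.zpowers (hc n m)).Normal := by
  rw [← Subgroup.normalizer_eq_top_iff]
  rw [eq_top_iff]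
  intro x _
  refine PresentedGroup.generated_by _ _ (fun j => ?_) x
  fin_cases j
  · exact normalizer_helper (rel_ac' n m) (rel_ac n m)
      (Subgroup.inv_mem _ (Subgroup.mem_zpowers _)) (Subgroup.inv_mem _ (Subgroup.mem_zpowers _))
  · exact normalizer_helper (rel_bc' n m) (rel_bc n m)
      (Subgroup.mem_zpowers _) (Subgroup.mem_zpowers _)
  · exact Subgroup.le_normalizer (Subgroup.mem_zpowers (hc n m))

/-- The explicit homomorphism to the dihedral group of order 16. -/
def dmap : Fin 3 → DihedralGroup 8 :=
  ![DihedralGroup.sr 0, DihedralGroup.r 1, DihedralGroup.r (-2)]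

lemma dmap_rels (n m : ℕ) (hm : 2 < m) (hmn : m < n) :
    ∀ r ∈ hrels n m, FreeGroup.lift dmap r = 1 := by
  intro r hr
  simp only [hrels, Set.mem_insert_iff, Set.mem_singleton_iff] at hr
  rcases hr with rfl | rfl | rfl | rfl | rfl | rfl
  · simp only [map_mul, map_inv, FreeGroup.lift_apply_of, dmap]
    decide
  · rw [map_pow, FreeGroup.lift_apply_of]
    rw [show (2 : ℕ) ^ n = 2 * 2 ^ (n - 1) by rw [← pow_succ']; congr 1; omega, pow_mul]
    norm_num [dmap]
    rw [show (DihedralGroup.sr 0 : DihedralGroup 8) ^ 2 = 1 by decide, one_pow]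
  · rw [map_pow, FreeGroup.lift_apply_of]
    rw [show (2 : ℕ) ^ m = 8 * 2 ^ (m - 3) by
      rw [show (8 : ℕ) = 2 ^ 3 from rfl, ← pow_add]; congr 1; omega, pow_mul]
    norm_num [dmap]
    simp [show (8 : ZMod 8) = 0 from rfl]
  · rw [map_pow, FreeGroup.lift_apply_of]
    norm_num [dmap]
    decide
  · simp only [map_mul, map_inv, FreeGroup.lift_apply_of, dmap]
    decide
  · simp only [map_mul, map_inv, FreeGroup.lift_apply_of, dmap]
    decide

lemma orderOf_hc (n m : ℕ) (hm : 2 < m) (hmn : m < n) : orderOf (hc n m) = 4 := by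
  have hdvd : orderOf (hc n m) ∣ 4 := orderOf_dvd_of_pow_eq_one (rel_c4 n m)
  let φ : HH n m →* DihedralGroup 8 := PresentedGroup.toGroup (dmap_rels n m hm hmn)
  have hφc : φ (hc n m) = DihedralGroup.r (-2) := by
    show φ (PresentedGroup.of 2) = _
    rw [PresentedGroup.toGroup.of]
    rfl
  have h4 : orderOf (DihedralGroup.r (-2 : ZMod 8)) = 4 := by
    rw [DihedralGroup.orderOf_r]
    decide
  have hdvd2 : 4 ∣ orderOf (hc n m) := by
    rw [← h4, ← hφc]
    exact orderOf_map_dvd φ (hc n m)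
  exact Nat.dvd_antisymm hdvd hdvd2

open scoped commutatorElement in
/-- The derived subgroup `H'` of `H` is the cyclic subgroup generated by
`c`, and it has order 4. -/
theorem statement_4 (n m : ℕ) (hm : 2 < m) (hmn : m < n) :
    commutator (HH n m) = Subgroup.zpowers (hc n m) ∧
    Nat.card (commutator (HH n m)) = 4 := by
  haveI hN : (Subgroup.zpowers (hc n m)).Normal := zpowers_hc_normal n m
  set N := Subgroup.zpowers (hc n m) with hNdef
  let π : HH n m →* HH n m ⧸ N := QuotientGroup.mk' N
  have hc1 : π (PresentedGroup.of (2 : Fin 3)) = 1 :=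
    (QuotientGroup.eq_one_iff _).2 (Subgroup.mem_zpowers (hc n m))
  have hab : π (PresentedGroup.of (0 : Fin 3)) * π (PresentedGroup.of (1 : Fin 3)) =
      π (PresentedGroup.of (1 : Fin 3)) * π (PresentedGroup.of (0 : Fin 3)) := by
    have hba : hb n m * ha n m = ha n m * hb n m * hc n m := by
      rw [rel_c n m]; group
    have hπc : π (hc n m) = 1 := hc1
    show π (ha n m) * π (hb n m) = π (hb n m) * π (ha n m)
    calc π (ha n m) * π (hb n m)
        = π (ha n m) * π (hb n m) * π (hc n m) := by rw [hπc, mul_one]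
      _ = π (ha n m * hb n m * hc n m) := by rw [map_mul, map_mul]
      _ = π (hb n m * ha n m) := by rw [← hba]
      _ = π (hb n m) * π (ha n m) := by rw [map_mul]
  have key : ∀ i j : Fin 3, π (PresentedGroup.of i) * π (PresentedGroup.of j) =
      π (PresentedGroup.of j) * π (PresentedGroup.of i) := by
    intro i j
    fin_cases i <;> fin_cases j <;>
      first
        | rfl
        | exact hab
        | exact hab.symm
        | (rw [show ((⟨2, by omega⟩ : Fin 3)) = (2 : Fin 3) from rfl] at *; rw [hc1, one_mul, mul_one])
  have hcen : ∀ g : HH n m, π g ∈ Subgroup.center (HH n m ⧸ N) := by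
    intro g
    refine PresentedGroup.generated_by _ ((Subgroup.center _).comap π) (fun j => ?_) g
    rw [Subgroup.mem_comap, Subgroup.mem_center_iff]
    intro y
    obtain ⟨x, rfl⟩ := QuotientGroup.mk'_surjective N y
    have hx : x ∈ (Subgroup.centralizer {π (PresentedGroup.of j)}).comap π := by
      refine PresentedGroup.generated_by _ _ (fun i => ?_) x
      rw [Subgroup.mem_comap, Subgroup.mem_centralizer_iff]
      intro h hh
      rw [Set.mem_singleton_iff] at hh
      rw [hh]
      exact key j i
    rw [Subgroup.mem_comap, Subgroup.mem_centralizer_iff] at hx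
    show π x * π (PresentedGroup.of j) = π (PresentedGroup.of j) * π x
    exact (hx _ (Set.mem_singleton _)).symm
  have hle : commutator (HH n m) ≤ N := by
    rw [commutator_def]
    rw [Subgroup.commutator_le]
    intro g _ h _
    have hcomm : Commute (π g) (π h) := (Subgroup.mem_center_iff.1 (hcen g) (π h)).symm
    have h1 : π ⁅g, h⁆ = 1 := by
      rw [map_commutatorElement]
      exact commutatorElement_eq_one_iff_commute.2 hcomm
    exact (QuotientGroup.eq_one_iff _).1 h1
  have hge : N ≤ commutator (HH n m) := by
    rw [hNdef, Subgroup.zpowers_le]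
    have hceq : hc n m = ⁅(hb n m)⁻¹, (ha n m)⁻¹⁆ := by
      rw [commutatorElement_def, rel_c n m]; group
    rw [hceq, commutator_def]
    exact Subgroup.commutator_mem_commutator (Subgroup.mem_top _) (Subgroup.mem_top _)
  have heq : commutator (HH n m) = N := le_antisymm hle hge
  refine ⟨heq, ?_⟩
  rw [heq, hNdef, Nat.card_zpowers, orderOf_hc n m hm hmn]

end MIP
end

section
/- In G the element x² lies in the center Z(G), and in H the element a² lies in the center Z(H). -/
namespace MIP

lemma central_sq {rels : Set (FreeGroup (Fin 3))}
    (hr1 : (FreeGroup.of 2)⁻¹ * ((FreeGroup.of 1)⁻¹ * (FreeGroup.of 0)⁻¹ * FreeGroup.of 1 * FreeGroup.of 0) ∈ rels)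
    (hr5 : (FreeGroup.of 0)⁻¹ * FreeGroup.of 2 * FreeGroup.of 0 * FreeGroup.of 2 ∈ rels) :
    (PresentedGroup.of 0 : PresentedGroup rels) ^ 2 ∈ Subgroup.center (PresentedGroup rels) := by
  have rel_one : ∀ r ∈ rels, PresentedGroup.mk rels r = 1 := fun r hr =>
    (QuotientGroup.eq_one_iff r).mpr (Subgroup.subset_normalClosure hr)
  set X : PresentedGroup rels := PresentedGroup.of 0 with hX
  set Y : PresentedGroup rels := PresentedGroup.of 1 with hY
  set Z : PresentedGroup rels := PresentedGroup.of 2 with hZ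
  have h1 : Z⁻¹ * (Y⁻¹ * X⁻¹ * Y * X) = 1 := by
    have h := rel_one _ hr1; simp only [map_mul, map_inv] at h; exact h
  have h5 : X⁻¹ * Z * X * Z = 1 := by
    have h := rel_one _ hr5; simp only [map_mul, map_inv] at h; exact h
  have hz : Z = Y⁻¹ * X⁻¹ * Y * X := inv_mul_eq_one.mp h1
  have hzx : X⁻¹ * Z * X = Z⁻¹ := mul_eq_one_iff_eq_inv.mp h5
  have hzx' : X⁻¹ * Z⁻¹ * X = Z := by
    rw [show X⁻¹ * Z⁻¹ * X = (X⁻¹ * Z * X)⁻¹ by group, hzx, inv_inv]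
  have key : X⁻¹ * (Y⁻¹ * X⁻¹ * Y * X) * X = X⁻¹ * Y⁻¹ * X * Y := by
    rw [← hz, hzx, hz]; group
  have hxy : Y * X ^ 2 = X ^ 2 * Y := by
    calc Y * X ^ 2 = X * Y * X * (X⁻¹ * (Y⁻¹ * X⁻¹ * Y * X) * X) := by rw [sq]; group
      _ = X * Y * X * (X⁻¹ * Y⁻¹ * X * Y) := by rw [key]
      _ = X ^ 2 * Y := by rw [sq]; group
  have hxz : Z * X ^ 2 = X ^ 2 * Z := by
    calc Z * X ^ 2 = X * (X⁻¹ * Z * X) * X := by rw [sq]; group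
      _ = X * Z⁻¹ * X := by rw [hzx]
      _ = X ^ 2 * (X⁻¹ * Z⁻¹ * X) := by rw [sq]; group
      _ = X ^ 2 * Z := by rw [hzx']
  refine Subgroup.mem_center_iff.mpr fun g => ?_
  have hg : g ∈ Subgroup.centralizer {X ^ 2} := by
    refine PresentedGroup.generated_by rels _ (fun j => ?_) g
    rw [Subgroup.mem_centralizer_iff]
    intro h hh
    rw [Set.mem_singleton_iff] at hh
    subst hh
    fin_cases j
    · show X ^ 2 * X = X * X ^ 2; rw [sq]; group
    · exact hxy.symm
    · exact hxz.symm
  exact (Subgroup.mem_centralizer_iff.mp hg (X ^ 2) rfl).symm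

/-- In `G` the element `x²` lies in the center `Z(G)`, and in `H` the
element `a²` lies in the center `Z(H)`. -/
theorem statement_5 (n m : ℕ) (hm : 2 < m) (hmn : m < n) :
    gx n m ^ 2 ∈ Subgroup.center (GG n m) ∧
    ha n m ^ 2 ∈ Subgroup.center (HH n m) := by
  constructor
  · exact central_sq (by simp [grels]) (by simp [grels])
  · exact central_sq (by simp [hrels]) (by simp [hrels])

end MIP
end

section
/- In G, the element x has order exactly 2^n, the element y² has order at most 2^{n-2}, and (xy)² = x² y² z^{-1}; consequently the exponent of the centralizer C_G(G') is 2^n. -/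
namespace MIP

def sg (u : ZMod 2) : ZMod 4 := if u = 0 then 1 else -1
def tt (u v : ZMod 2) : ZMod 4 := if u = 1 ∧ v = 1 then 1 else 0

theorem key_assoc : ∀ (u2 u3 u4 u5 u6 : ZMod 2) (c c' c'' : ZMod 4),
    sg (u5 + u6) * (sg (u3 + u4) * c + sg u4 * tt u3 u2 + c') + sg u6 * tt u5 (u2 + u4) + c''
    = sg (u3 + u5 + (u4 + u6)) * c + sg (u4 + u6) * tt (u3 + u5) u2 +
      (sg (u5 + u6) * c' + sg u6 * tt u5 u4 + c'') := by decide

theorem key_onemul : ∀ (u1 u2 : ZMod 2) (c : ZMod 4),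
    sg (u1 + u2) * 0 + sg u2 * tt u1 0 + c = c := by decide

theorem key_mulone : ∀ (u2 : ZMod 2) (c : ZMod 4),
    sg (0 + 0) * c + sg 0 * tt 0 u2 + 0 = c := by decide

theorem key_invmul : ∀ (u1 u2 : ZMod 2) (c : ZMod 4),
    sg (u1 + u2) * -(sg (u1 + u2) * c + sg u2 * tt u1 u2) + sg u2 * tt u1 (-u2) + c = 0 := by
  decide

@[ext]
structure Md (N M : ℕ) where
  a : ZMod (4*N)
  b : ZMod (4*M)
  c : ZMod 4

namespace Md

variable {N M : ℕ}

def pa : ZMod (4*N) →+* ZMod 2 := ZMod.castHom (show 2 ∣ 4*N from ⟨2*N, by ring⟩) (ZMod 2)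
def pb : ZMod (4*M) →+* ZMod 2 := ZMod.castHom (show 2 ∣ 4*M from ⟨2*M, by ring⟩) (ZMod 2)

instance : Mul (Md N M) :=
  ⟨fun p q => ⟨p.a + q.a, p.b + q.b,
    sg (pa q.a + pb q.b) * p.c + sg (pb q.b) * tt (pa q.a) (pb p.b) + q.c⟩⟩

instance : One (Md N M) := ⟨⟨0, 0, 0⟩⟩

instance : Inv (Md N M) :=
  ⟨fun p => ⟨-p.a, -p.b,
    -(sg (pa p.a + pb p.b) * p.c + sg (pb p.b) * tt (pa p.a) (pb p.b))⟩⟩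

theorem mul_def (p q : Md N M) : p * q = ⟨p.a + q.a, p.b + q.b,
    sg (pa q.a + pb q.b) * p.c + sg (pb q.b) * tt (pa q.a) (pb p.b) + q.c⟩ := rfl

theorem one_def : (1 : Md N M) = ⟨0, 0, 0⟩ := rfl

theorem inv_def (p : Md N M) : p⁻¹ = ⟨-p.a, -p.b,
    -(sg (pa p.a + pb p.b) * p.c + sg (pb p.b) * tt (pa p.a) (pb p.b))⟩ := rfl

theorem mul_assoc' (p q r : Md N M) : (p * q) * r = p * (q * r) := by
  obtain ⟨a, b, c⟩ := p; obtain ⟨a', b', c'⟩ := q; obtain ⟨a'', b'', c''⟩ := r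
  simp only [mul_def, map_add]
  rw [Md.mk.injEq]
  exact ⟨by ring, by ring, key_assoc _ _ _ _ _ _ _ _⟩

theorem one_mul' (p : Md N M) : 1 * p = p := by
  obtain ⟨a, b, c⟩ := p
  simp only [mul_def, one_def, map_zero]
  rw [Md.mk.injEq]
  exact ⟨by ring, by ring, key_onemul _ _ _⟩

theorem mul_one' (p : Md N M) : p * 1 = p := by
  obtain ⟨a, b, c⟩ := p
  simp only [mul_def, one_def, map_zero]
  rw [Md.mk.injEq]
  exact ⟨by ring, by ring, key_mulone _ _⟩

theorem inv_mul_cancel' (p : Md N M) : p⁻¹ * p = 1 := by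
  obtain ⟨a, b, c⟩ := p
  simp only [mul_def, inv_def, one_def, map_add, map_neg]
  rw [Md.mk.injEq]
  exact ⟨by ring, by ring, key_invmul _ _ _⟩

instance : Group (Md N M) where
  mul_assoc := mul_assoc'
  one_mul := one_mul'
  mul_one := mul_one'
  inv_mul_cancel := inv_mul_cancel'

theorem zm4_four (u : ZMod 4) : u + u + (u + u) = 0 := by revert u; decide

def X : Md N M := ⟨1, 0, 0⟩
def Y : Md N M := ⟨0, 1, 0⟩
def Z : Md N M := ⟨0, 0, 1⟩

theorem sg_zero : sg 0 = 1 := rfl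
theorem tt_zero_left (v : ZMod 2) : tt 0 v = 0 := rfl
theorem zm2 : ∀ u : ZMod 2, u = 0 ∨ u = 1 := by decide

theorem tt_zero_right (u : ZMod 2) : tt u 0 = 0 := by
  rcases zm2 u with h | h <;> subst h <;> decide

theorem a_pow (p : Md N M) (k : ℕ) : (p ^ k).a = (k : ZMod (4*N)) * p.a := by
  induction k with
  | zero => simp [one_def]
  | succ k ih => rw [pow_succ, mul_def]; push_cast; simp [ih]; ring

theorem b_pow (p : Md N M) (k : ℕ) : (p ^ k).b = (k : ZMod (4*M)) * p.b := by
  induction k with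
  | zero => simp [one_def]
  | succ k ih => rw [pow_succ, mul_def]; push_cast; simp [ih]; ring

theorem even_sq (p : Md N M) (h1 : pa p.a = 0) (h2 : pb p.b = 0) :
    p ^ 2 = ⟨p.a + p.a, p.b + p.b, p.c + p.c⟩ := by
  rw [pow_two, mul_def, h1, h2]
  rw [Md.mk.injEq]
  exact ⟨rfl, rfl, by simp [sg_zero, tt_zero_left]⟩

theorem even_pow (p : Md N M) (h1 : pa p.a = 0) (h2 : pb p.b = 0) (k : ℕ) :
    p ^ (2^k) = ⟨((2^k : ℕ) : ZMod (4*N)) * p.a, ((2^k : ℕ) : ZMod (4*M)) * p.b,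
      ((2^k : ℕ) : ZMod 4) * p.c⟩ := by
  induction k with
  | zero => simp [pow_one]
  | succ k ih =>
    have h2k : (2:ℕ)^(k+1) = 2^k * 2 := by ring
    have e1 : pa ((⟨((2^k : ℕ) : ZMod (4*N)) * p.a, ((2^k : ℕ) : ZMod (4*M)) * p.b,
        ((2^k : ℕ) : ZMod 4) * p.c⟩ : Md N M).a) = 0 := by
      show pa (((2^k:ℕ) : ZMod (4*N)) * p.a) = 0
      rw [map_mul, map_natCast, h1, mul_zero]
    have e2 : pb ((⟨((2^k : ℕ) : ZMod (4*N)) * p.a, ((2^k : ℕ) : ZMod (4*M)) * p.b,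
        ((2^k : ℕ) : ZMod 4) * p.c⟩ : Md N M).b) = 0 := by
      show pb (((2^k:ℕ) : ZMod (4*M)) * p.b) = 0
      rw [map_mul, map_natCast, h2, mul_zero]
    rw [h2k, pow_mul, ih, even_sq _ e1 e2]
    rw [Md.mk.injEq]
    refine ⟨?_, ?_, ?_⟩ <;> · show _ + _ = _; push_cast; ring

theorem pow_eight (p : Md N M) :
    p ^ 8 = ⟨((8:ℕ) : ZMod (4*N)) * p.a, ((8:ℕ) : ZMod (4*M)) * p.b, 0⟩ := by
  obtain ⟨a, b, c⟩ := p
  have h2 : (⟨a,b,c⟩ : Md N M) ^ 2 = ⟨a + a, b + b,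
      sg (pa a + pb b) * c + sg (pb b) * tt (pa a) (pb b) + c⟩ := by
    rw [pow_two, mul_def]
  have e1 : pa (a + a) = 0 := by rw [map_add]; exact CharTwo.add_self_eq_zero _
  have e2 : pb (b + b) = 0 := by rw [map_add]; exact CharTwo.add_self_eq_zero _
  have h8 : (8:ℕ) = 2 * (2 * 2) := by norm_num
  set C := sg (pa a + pb b) * c + sg (pb b) * tt (pa a) (pb b) + c with hC
  have e1' : pa ((⟨a + a, b + b, C⟩ : Md N M).a) = 0 := e1
  have e2' : pb ((⟨a + a, b + b, C⟩ : Md N M).b) = 0 := e2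
  have h4 : (⟨a + a, b + b, C⟩ : Md N M) ^ 2 = ⟨a + a + (a + a), b + b + (b + b), C + C⟩ :=
    even_sq _ e1' e2'
  have f1 : pa ((⟨a + a + (a + a), b + b + (b + b), C + C⟩ : Md N M).a) = 0 := by
    show pa (a + a + (a + a)) = 0
    simp [map_add, CharTwo.add_self_eq_zero]
  have f2 : pb ((⟨a + a + (a + a), b + b + (b + b), C + C⟩ : Md N M).b) = 0 := by
    show pb (b + b + (b + b)) = 0
    simp [map_add, CharTwo.add_self_eq_zero]
  have h8' : (⟨a + a + (a + a), b + b + (b + b), C + C⟩ : Md N M) ^ 2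
      = ⟨a + a + (a + a) + (a + a + (a + a)), b + b + (b + b) + (b + b + (b + b)),
         C + C + (C + C)⟩ := even_sq _ f1 f2
  rw [show (⟨a,b,c⟩ : Md N M) ^ 8 = (((⟨a,b,c⟩ : Md N M) ^ 2) ^ 2) ^ 2 by
    rw [← pow_mul, ← pow_mul], h2, h4, h8', Md.mk.injEq]
  refine ⟨by push_cast; ring, by push_cast; ring, zm4_four _⟩

theorem X_pow (k : ℕ) : (X : Md N M) ^ k = ⟨(k : ZMod (4*N)), 0, 0⟩ := by
  induction k with
  | zero => simp [one_def]
  | succ k ih =>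
    rw [pow_succ, ih, X, mul_def, Md.mk.injEq]
    refine ⟨by push_cast; ring, by ring, ?_⟩
    simp [sg, tt, map_one, map_zero]

theorem Y_pow (k : ℕ) : (Y : Md N M) ^ k = ⟨0, (k : ZMod (4*M)), 0⟩ := by
  induction k with
  | zero => simp [one_def]
  | succ k ih =>
    rw [pow_succ, ih, Y, mul_def, Md.mk.injEq]
    refine ⟨by ring, by push_cast; ring, ?_⟩
    simp [sg, tt, map_one, map_zero]

theorem Z_pow (k : ℕ) : (Z : Md N M) ^ k = ⟨0, 0, (k : ZMod 4)⟩ := by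
  induction k with
  | zero => simp [one_def]
  | succ k ih =>
    rw [pow_succ, ih, Z, mul_def, Md.mk.injEq]
    refine ⟨by ring, by ring, ?_⟩
    simp [sg, tt, map_one, map_zero]

theorem rel1 : (Y : Md N M)⁻¹ * X⁻¹ * Y * X = Z := by
  rw [X, Y, Z, inv_def, inv_def]
  simp only [mul_def, map_add, map_neg, map_one, map_zero, neg_zero]
  rw [Md.mk.injEq]
  refine ⟨by ring, by ring, by simp [sg, tt]⟩

theorem rel4 : (X : Md N M)⁻¹ * Z * X * Z = 1 := by
  rw [X, Z, inv_def, one_def]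
  simp only [mul_def, map_add, map_neg, map_one, map_zero, neg_zero]
  rw [Md.mk.injEq]
  refine ⟨by ring, by ring, by simp [sg, tt]⟩

theorem rel5 : (Y : Md N M)⁻¹ * Z * Y * Z = 1 := by
  rw [Y, Z, inv_def, one_def]
  simp only [mul_def, map_add, map_neg, map_one, map_zero, neg_zero]
  rw [Md.mk.injEq]
  refine ⟨by ring, by ring, by simp [sg, tt]⟩

theorem XY : (X : Md N M) * Y = ⟨1, 1, 0⟩ := by
  rw [X, Y]
  simp only [mul_def, map_one, map_zero]
  rw [Md.mk.injEq]
  refine ⟨by ring, by ring, by simp [sg, tt]⟩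

open scoped commutatorElement in
theorem comm_ab (p q : Md N M) : (⁅p, q⁆).a = 0 ∧ (⁅p, q⁆).b = 0 := by
  rw [commutatorElement_def]
  obtain ⟨a, b, c⟩ := p; obtain ⟨a', b', c'⟩ := q
  simp only [mul_def, inv_def]
  exact ⟨by ring, by ring⟩

theorem central_comm (c : ZMod 4) (p : Md N M) (h1 : p.a = 0) (h2 : p.b = 0) :
    p * ⟨1, 1, 0⟩ = ⟨1, 1, 0⟩ * p := by
  obtain ⟨a, b, g⟩ := p
  simp only at h1 h2
  subst h1; subst h2
  simp only [mul_def, map_one, map_zero]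
  rw [Md.mk.injEq]
  refine ⟨by ring, by ring, by
    simp [sg, tt, show ((1:ZMod 2) + 1) = 0 by decide]⟩

theorem pow_eq_one (p : Md N M) (k : ℕ) (hk : 3 ≤ k) (hN : (4*N) ∣ 2^k) (hM : (4*M) ∣ 2^k) :
    p ^ (2^k) = 1 := by
  have h8 : (2:ℕ)^k = 8 * 2^(k-3) := by
    have : k - 3 + 3 = k := by omega
    calc (2:ℕ)^k = 2^(k-3+3) := by rw [this]
    _ = 8 * 2^(k-3) := by rw [pow_add]; ring
  rw [h8, pow_mul, pow_eight]
  have e1 : pa ((⟨((8:ℕ) : ZMod (4*N)) * p.a, ((8:ℕ) : ZMod (4*M)) * p.b, 0⟩ : Md N M).a) = 0 := by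
    show pa (((8:ℕ) : ZMod (4*N)) * p.a) = 0
    have h80 : ((8:ℕ) : ZMod 2) = 0 := by decide
    rw [map_mul, map_natCast, h80, zero_mul]
  have e2 : pb ((⟨((8:ℕ) : ZMod (4*N)) * p.a, ((8:ℕ) : ZMod (4*M)) * p.b, 0⟩ : Md N M).b) = 0 := by
    show pb (((8:ℕ) : ZMod (4*M)) * p.b) = 0
    have h80 : ((8:ℕ) : ZMod 2) = 0 := by decide
    rw [map_mul, map_natCast, h80, zero_mul]
  have hpow : (2:ℕ)^(k-3) * 8 = 2^k := by
    rw [show (8:ℕ) = 2^3 from rfl, ← pow_add]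
    congr 1
    omega
  rw [even_pow _ e1 e2, one_def, Md.mk.injEq]
  refine ⟨?_, ?_, by simp⟩
  · show ((2^(k-3) : ℕ) : ZMod (4*N)) * (((8:ℕ) : ZMod (4*N)) * p.a) = 0
    rw [← mul_assoc, ← Nat.cast_mul, hpow,
      (ZMod.natCast_eq_zero_iff _ _).mpr hN, zero_mul]
  · show ((2^(k-3) : ℕ) : ZMod (4*M)) * (((8:ℕ) : ZMod (4*M)) * p.b) = 0
    rw [← mul_assoc, ← Nat.cast_mul, hpow,
      (ZMod.natCast_eq_zero_iff _ _).mpr hM, zero_mul]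

theorem X_inv : (X : Md N M)⁻¹ = ⟨-1, 0, 0⟩ := by
  rw [X, inv_def, Md.mk.injEq]
  refine ⟨rfl, by ring, ?_⟩
  simp [map_one, map_zero, tt_zero_right]

theorem Y_inv : (Y : Md N M)⁻¹ = ⟨0, -1, 0⟩ := by
  rw [Y, inv_def, Md.mk.injEq]
  refine ⟨by ring, rfl, ?_⟩
  simp [map_one, map_zero, tt_zero_left]

theorem Z_inv : (Z : Md N M)⁻¹ = ⟨0, 0, -1⟩ := by
  rw [Z, inv_def, Md.mk.injEq]
  refine ⟨by ring, by ring, ?_⟩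
  simp [map_zero, tt_zero_left, sg_zero]

theorem X_zpow (k : ℤ) : (X : Md N M) ^ k = ⟨(k : ZMod (4*N)), 0, 0⟩ := by
  cases k with
  | ofNat j => rw [Int.ofNat_eq_coe, zpow_natCast, X_pow]; push_cast; rfl
  | negSucc j =>
    rw [zpow_negSucc, X_pow, inv_def, Md.mk.injEq]
    refine ⟨by push_cast; ring, by ring, ?_⟩
    simp [map_natCast, map_zero, tt_zero_right]

theorem Y_zpow (k : ℤ) : (Y : Md N M) ^ k = ⟨0, (k : ZMod (4*M)), 0⟩ := by
  cases k with
  | ofNat j => rw [Int.ofNat_eq_coe, zpow_natCast, Y_pow]; push_cast; rfl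
  | negSucc j =>
    rw [zpow_negSucc, Y_pow, inv_def, Md.mk.injEq]
    refine ⟨by ring, by push_cast; ring, ?_⟩
    simp [map_natCast, map_zero, tt_zero_left]

theorem Z_zpow (k : ℤ) : (Z : Md N M) ^ k = ⟨0, 0, (k : ZMod 4)⟩ := by
  cases k with
  | ofNat j => rw [Int.ofNat_eq_coe, zpow_natCast, Z_pow]; push_cast; rfl
  | negSucc j =>
    rw [zpow_negSucc, Z_pow, inv_def, Md.mk.injEq]
    refine ⟨by ring, by ring, ?_⟩
    simp [map_zero, tt_zero_left, sg_zero]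

theorem mk_abc (a : ZMod (4*N)) (b : ZMod (4*M)) (c : ZMod 4) :
    (⟨a, 0, 0⟩ : Md N M) * ⟨0, b, 0⟩ * ⟨0, 0, c⟩ = ⟨a, b, c⟩ := by
  simp only [mul_def, map_zero]
  rw [Md.mk.injEq]
  refine ⟨by ring, by ring, by simp [sg_zero, tt_zero_left, tt_zero_right]⟩

end Md
section RelLemmas

variable {G : Type*} [Group G] {x y z : G}

theorem conj_inv_zpow (h : x⁻¹ * z * x = z⁻¹) (c : ℤ) : x⁻¹ * z^c * x = z^(-c) := by
  have h' := conj_zpow (i := c) (a := x⁻¹) (b := z)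
  rw [inv_inv] at h'
  rw [← h', h, inv_zpow, ← zpow_neg]

theorem zx_comm (h : x⁻¹ * z * x = z⁻¹) (c : ℤ) : z^c * x = x * z^(-c) := by
  calc z^c * x = x * (x⁻¹ * z^c * x) := by group
  _ = x * z^(-c) := by rw [conj_inv_zpow h]

theorem conj_pos_zpow (h : x⁻¹ * z * x = z⁻¹) (c : ℤ) : x * z^c * x⁻¹ = z^(-c) := by
  have h' := zx_comm h (-c)
  rw [neg_neg] at h'
  calc x * z^c * x⁻¹ = (z^(-c) * x) * x⁻¹ := by rw [h']
  _ = z^(-c) := by group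

theorem zx_comm' (h : x⁻¹ * z * x = z⁻¹) (c : ℤ) : z^c * x⁻¹ = x⁻¹ * z^(-c) := by
  calc z^c * x⁻¹ = x⁻¹ * (x * z^c * x⁻¹) := by group
  _ = x⁻¹ * z^(-c) := by rw [conj_pos_zpow h]

theorem xyx (h1 : y * x = x * y * z) : x⁻¹ * y * x = y * z := by
  calc x⁻¹ * y * x = x⁻¹ * (y * x) := by group
  _ = x⁻¹ * (x * y * z) := by rw [h1]
  _ = y * z := by group

theorem xyx' (h1 : y * x = x * y * z) (h2 : x⁻¹ * z * x = z⁻¹) : x * y * x⁻¹ = y * z := by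
  have aux : x⁻¹ * (y * z) * x = y := by
    calc x⁻¹ * (y * z) * x = (x⁻¹ * y * x) * (x⁻¹ * z * x) := by group
    _ = (y * z) * z⁻¹ := by rw [xyx h1, h2]
    _ = y := by group
  calc x * y * x⁻¹ = x * (x⁻¹ * (y * z) * x) * x⁻¹ := by rw [aux]
  _ = y * z := by group

theorem K0 (h3 : y⁻¹ * z * y = z⁻¹) (b : ℤ) : ∃ e : ℤ, (y * z)^b = y^b * z^e := by
  induction b using Int.induction_on with
  | zero => exact ⟨0, by simp⟩
  | succ k ih =>
    obtain ⟨e, he⟩ := ih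
    refine ⟨-e + 1, ?_⟩
    calc (y*z)^((k:ℤ)+1) = (y*z)^(k:ℤ) * (y*z) := by rw [zpow_add_one]
    _ = y^(k:ℤ) * z^e * (y * z) := by rw [he]
    _ = y^(k:ℤ) * (z^e * y) * z := by group
    _ = y^(k:ℤ) * (y * z^(-e)) * z := by rw [zx_comm h3]
    _ = y^((k:ℤ)+1) * (z^(-e) * z^(1:ℤ)) := by group
    _ = y^((k:ℤ)+1) * z^(-e+1) := by rw [← zpow_add]
  | pred k ih =>
    obtain ⟨e, he⟩ := ih
    refine ⟨-(e - 1), ?_⟩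
    calc (y*z)^(-(k:ℤ)-1) = (y*z)^(-(k:ℤ)) * (y*z)⁻¹ := by rw [zpow_sub_one]
    _ = y^(-(k:ℤ)) * z^e * (y*z)⁻¹ := by rw [he]
    _ = y^(-(k:ℤ)) * (z^(e-1) * y⁻¹) := by group
    _ = y^(-(k:ℤ)) * (y⁻¹ * z^(-(e-1))) := by rw [zx_comm' h3]
    _ = y^(-(k:ℤ)-1) * z^(-(e-1)) := by group

theorem K1 (h1 : y * x = x * y * z) (h2 : x⁻¹ * z * x = z⁻¹) (h3 : y⁻¹ * z * y = z⁻¹)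
    (k : ℤ) : ∀ b c : ℤ, ∃ d : ℤ, x^(-k) * (y^b * z^c) * x^k = y^b * z^d := by
  induction k using Int.induction_on with
  | zero => intro b c; exact ⟨c, by simp⟩
  | succ k ih =>
    intro b c
    obtain ⟨d, hd⟩ := ih b c
    obtain ⟨e, he⟩ := K0 h3 b
    refine ⟨e + -d, ?_⟩
    have hcb : (x⁻¹ * y * x)^b = x⁻¹ * y^b * x := by
      have h' := conj_zpow (i := b) (a := x⁻¹) (b := y)
      rw [inv_inv] at h'
      rw [h']
    calc x^(-((k:ℤ)+1)) * (y^b * z^c) * x^((k:ℤ)+1)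
        = x⁻¹ * (x^(-(k:ℤ)) * (y^b * z^c) * x^(k:ℤ)) * x := by group
    _ = x⁻¹ * (y^b * z^d) * x := by rw [hd]
    _ = (x⁻¹ * y^b * x) * (x⁻¹ * z^d * x) := by group
    _ = (x⁻¹ * y * x)^b * (x⁻¹ * z^d * x) := by rw [hcb]
    _ = (y * z)^b * z^(-d) := by rw [xyx h1, conj_inv_zpow h2]
    _ = y^b * z^e * z^(-d) := by rw [he]
    _ = y^b * (z^e * z^(-d)) := by group
    _ = y^b * z^(e + -d) := by rw [← zpow_add]
  | pred k ih =>
    intro b c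
    obtain ⟨d, hd⟩ := ih b c
    obtain ⟨e, he⟩ := K0 h3 b
    refine ⟨e + -d, ?_⟩
    have hcb : (x * y * x⁻¹)^b = x * y^b * x⁻¹ := by
      have h' := conj_zpow (i := b) (a := x) (b := y)
      rw [h']
    calc x^(-(-(k:ℤ)-1)) * (y^b * z^c) * x^(-(k:ℤ)-1)
        = x * (x^(-(-(k:ℤ))) * (y^b * z^c) * x^(-(k:ℤ))) * x⁻¹ := by group
    _ = x * (y^b * z^d) * x⁻¹ := by rw [hd]
    _ = (x * y^b * x⁻¹) * (x * z^d * x⁻¹) := by group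
    _ = (x * y * x⁻¹)^b * (x * z^d * x⁻¹) := by rw [hcb]
    _ = (y * z)^b * z^(-d) := by rw [xyx' h1 h2, conj_pos_zpow h2]
    _ = y^b * z^e * z^(-d) := by rw [he]
    _ = y^b * (z^e * z^(-d)) := by group
    _ = y^b * z^(e + -d) := by rw [← zpow_add]

theorem K2 (h3 : y⁻¹ * z * y = z⁻¹) (k : ℤ) : ∀ c : ℤ, ∃ d : ℤ, y^(-k) * z^c * y^k = z^d := by
  induction k using Int.induction_on with
  | zero => intro c; exact ⟨c, by simp⟩
  | succ k ih =>
    intro c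
    obtain ⟨d, hd⟩ := ih c
    refine ⟨-d, ?_⟩
    calc y^(-((k:ℤ)+1)) * z^c * y^((k:ℤ)+1)
        = y⁻¹ * (y^(-(k:ℤ)) * z^c * y^(k:ℤ)) * y := by group
    _ = y⁻¹ * z^d * y := by rw [hd]
    _ = z^(-d) := by rw [conj_inv_zpow h3]
  | pred k ih =>
    intro c
    obtain ⟨d, hd⟩ := ih c
    refine ⟨-d, ?_⟩
    calc y^(-(-(k:ℤ)-1)) * z^c * y^(-(k:ℤ)-1)
        = y * (y^(-(-(k:ℤ))) * z^c * y^(-(k:ℤ))) * y⁻¹ := by group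
    _ = y * z^d * y⁻¹ := by rw [hd]
    _ = z^(-d) := by rw [conj_pos_zpow h3]

theorem sq_xy (h1 : y * x = x * y * z) (h3 : y⁻¹ * z * y = z⁻¹) :
    (x*y)^2 = x^2 * y^2 * z⁻¹ := by
  have hzy : z * y = y * z⁻¹ := by
    calc z * y = y * (y⁻¹ * z * y) := by group
    _ = y * z⁻¹ := by rw [h3]
  have main : (x*y)*(x*y) = (x*x)*(y*y)*z⁻¹ := by
    calc x*y*(x*y) = x*(y*x)*y := by group
    _ = x*(x*y*z)*y := by rw [h1]
    _ = x*x*y*(z*y) := by group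
    _ = x*x*y*(y*z⁻¹) := by rw [hzy]
    _ = x*x*(y*y)*z⁻¹ := by group
  rw [pow_two, pow_two, pow_two, main]

theorem nf_mul (h1 : y * x = x * y * z) (h2 : x⁻¹ * z * x = z⁻¹) (h3 : y⁻¹ * z * y = z⁻¹)
    (a b c a' b' c' : ℤ) : ∃ A B C : ℤ,
    (x^a * y^b * z^c) * (x^a' * y^b' * z^c') = x^A * y^B * z^C := by
  obtain ⟨d, hd⟩ := K1 h1 h2 h3 a' b c
  obtain ⟨d', hd'⟩ := K2 h3 b' d
  refine ⟨a + a', b + b', d' + c', ?_⟩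
  calc (x^a * y^b * z^c) * (x^a' * y^b' * z^c')
      = x^(a+a') * (x^(-a') * (y^b * z^c) * x^a') * (y^b' * z^c') := by group
  _ = x^(a+a') * (y^b * z^d) * (y^b' * z^c') := by rw [hd]
  _ = x^(a+a') * y^(b+b') * (y^(-b') * z^d * y^b') * z^c' := by group
  _ = x^(a+a') * y^(b+b') * z^d' * z^c' := by rw [hd']
  _ = x^(a+a') * y^(b+b') * z^(d'+c') := by group

theorem nf_inv (h1 : y * x = x * y * z) (h2 : x⁻¹ * z * x = z⁻¹) (h3 : y⁻¹ * z * y = z⁻¹)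
    (a b c : ℤ) : ∃ A B C : ℤ, (x^a * y^b * z^c)⁻¹ = x^A * y^B * z^C := by
  obtain ⟨e, he⟩ := K2 h3 (-b) (-c)
  obtain ⟨d, hd⟩ := K1 h1 h2 h3 (-a) (-b) e
  refine ⟨-a, -b, d, ?_⟩
  calc (x^a * y^b * z^c)⁻¹ = z^(-c) * y^(-b) * x^(-a) := by group
  _ = y^(-b) * (y^(b) * z^(-c) * y^(-b)) * x^(-a) := by group
  _ = y^(-b) * z^e * x^(-a) := by rw [show y^(b:ℤ) = y^(-(-b):ℤ) by norm_num, he]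
  _ = x^(-a) * (x^(a) * (y^(-b) * z^e) * x^(-a)) := by group
  _ = x^(-a) * (y^(-b) * z^d) := by rw [show x^(a:ℤ) = x^(-(-a):ℤ) by norm_num, hd]
  _ = x^(-a) * y^(-b) * z^d := by group

end RelLemmas


section GGside

variable (n m : ℕ)

/-- abbreviation for the concrete model -/
abbrev MD (n m : ℕ) := Md (2^(n-2)) (2^(m-2))

def fmap : Fin 3 → MD n m := ![Md.X, Md.Y, Md.Z]

theorem fmap0 : fmap n m 0 = Md.X := rfl
theorem fmap1 : fmap n m 1 = Md.Y := rfl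
theorem fmap2 : fmap n m 2 = Md.Z := rfl

theorem hN4 (hn : 2 ≤ n) : 4 * 2^(n-2) = 2^n := by
  rw [show (4:ℕ) = 2^2 from rfl, ← pow_add]
  congr 1
  omega

theorem relhold (r : FreeGroup (Fin 3)) (hr : r ∈ grels n m) :
    PresentedGroup.mk (grels n m) r = 1 :=
  (QuotientGroup.eq_one_iff r).mpr (Subgroup.subset_normalClosure hr)

theorem gx_def : gx n m = PresentedGroup.mk (grels n m) (FreeGroup.of 0) := rfl
theorem gy_def : gy n m = PresentedGroup.mk (grels n m) (FreeGroup.of 1) := rfl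
theorem gz_def : gz n m = PresentedGroup.mk (grels n m) (FreeGroup.of 2) := rfl

theorem grel_mem1 : (FreeGroup.of 2)⁻¹ *
    ((FreeGroup.of 1)⁻¹ * (FreeGroup.of 0)⁻¹ * FreeGroup.of 1 * FreeGroup.of 0) ∈ grels n m := by
  simp [grels]

theorem grel_mem2 : FreeGroup.of 0 ^ (2^n) ∈ grels n m := by simp [grels]
theorem grel_mem3 : FreeGroup.of 1 ^ (2^m) ∈ grels n m := by simp [grels]
theorem grel_mem4 : FreeGroup.of 2 ^ 4 ∈ grels n m := by simp [grels]
theorem grel_mem5 : (FreeGroup.of 0)⁻¹ * FreeGroup.of 2 * FreeGroup.of 0 * FreeGroup.of 2 ∈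
    grels n m := by simp [grels]
theorem grel_mem6 : (FreeGroup.of 1)⁻¹ * FreeGroup.of 2 * FreeGroup.of 1 * FreeGroup.of 2 ∈
    grels n m := by simp [grels]

theorem ggh1 : gy n m * gx n m = gx n m * gy n m * gz n m := by
  have h := relhold n m _ (grel_mem1 n m)
  rw [map_mul, map_inv, map_mul, map_mul, map_mul, map_inv, map_inv] at h
  rw [gx_def, gy_def, gz_def]
  set X := PresentedGroup.mk (grels n m) (FreeGroup.of 0)
  set Y := PresentedGroup.mk (grels n m) (FreeGroup.of 1)
  set Z := PresentedGroup.mk (grels n m) (FreeGroup.of 2)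
  calc Y * X = X * Y * Z * (Z⁻¹ * (Y⁻¹ * X⁻¹ * Y * X)) := by group
  _ = X * Y * Z := by rw [h, mul_one]

theorem ggh2 : (gx n m)⁻¹ * gz n m * gx n m = (gz n m)⁻¹ := by
  have h := relhold n m _ (grel_mem5 n m)
  rw [map_mul, map_mul, map_mul, map_inv] at h
  rw [gx_def, gz_def]
  set X := PresentedGroup.mk (grels n m) (FreeGroup.of 0)
  set Z := PresentedGroup.mk (grels n m) (FreeGroup.of 2)
  calc X⁻¹ * Z * X = (X⁻¹ * Z * X * Z) * Z⁻¹ := by group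
  _ = Z⁻¹ := by rw [h, one_mul]

theorem ggh3 : (gy n m)⁻¹ * gz n m * gy n m = (gz n m)⁻¹ := by
  have h := relhold n m _ (grel_mem6 n m)
  rw [map_mul, map_mul, map_mul, map_inv] at h
  rw [gy_def, gz_def]
  set Y := PresentedGroup.mk (grels n m) (FreeGroup.of 1)
  set Z := PresentedGroup.mk (grels n m) (FreeGroup.of 2)
  calc Y⁻¹ * Z * Y = (Y⁻¹ * Z * Y * Z) * Z⁻¹ := by group
  _ = Z⁻¹ := by rw [h, one_mul]

theorem ggx2n : (gx n m)^(2^n) = 1 := by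
  have h := relhold n m _ (grel_mem2 n m)
  rw [map_pow] at h
  exact h

theorem ggy2m : (gy n m)^(2^m) = 1 := by
  have h := relhold n m _ (grel_mem3 n m)
  rw [map_pow] at h
  exact h

theorem ggz4 : (gz n m)^4 = 1 := by
  have h := relhold n m _ (grel_mem4 n m)
  rw [map_pow] at h
  exact h

/-- normal form -/
theorem ggnf (g : GG n m) : ∃ a b c : ℤ, g = (gx n m)^a * (gy n m)^b * (gz n m)^c := by
  have h1 := ggh1 n m
  have h2 := ggh2 n m
  have h3 := ggh3 n m
  let H : Subgroup (GG n m) :=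
    { carrier := {g | ∃ a b c : ℤ, g = (gx n m)^a * (gy n m)^b * (gz n m)^c}
      one_mem' := ⟨0, 0, 0, by simp⟩
      mul_mem' := by
        rintro p q ⟨a, b, c, rfl⟩ ⟨a', b', c', rfl⟩
        obtain ⟨A, B, C, h⟩ := nf_mul h1 h2 h3 a b c a' b' c'
        exact ⟨A, B, C, h⟩
      inv_mem' := by
        rintro p ⟨a, b, c, rfl⟩
        obtain ⟨A, B, C, h⟩ := nf_inv h1 h2 h3 a b c
        exact ⟨A, B, C, h⟩ }
  have hj : ∀ j : Fin 3, PresentedGroup.of j ∈ H := by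
    intro j
    fin_cases j
    · exact ⟨1, 0, 0, by simp [gx]⟩
    · exact ⟨0, 1, 0, by simp [gy]⟩
    · exact ⟨0, 0, 1, by simp [gz]⟩
  exact PresentedGroup.generated_by (grels n m) H hj g

theorem relcheck (hm : 2 < m) (hmn : m < n) :
    ∀ r ∈ grels n m, FreeGroup.lift (fmap n m) r = 1 := by
  have hn2 : 4 * 2^(n-2) = 2^n := hN4 n (by omega)
  have hm2 : 4 * 2^(m-2) = 2^m := hN4 m (by omega)
  intro r hr
  simp only [grels, Set.mem_insert_iff, Set.mem_singleton_iff] at hr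
  rcases hr with rfl | rfl | rfl | rfl | rfl | rfl
  · rw [map_mul, map_inv, map_mul, map_mul, map_mul, map_inv, map_inv,
      FreeGroup.lift_apply_of, FreeGroup.lift_apply_of, FreeGroup.lift_apply_of, fmap0, fmap1, fmap2,
      Md.rel1]
    group
  · rw [map_pow, FreeGroup.lift_apply_of, fmap0, Md.X_pow]
    rw [show (1 : MD n m) = ⟨0,0,0⟩ from rfl, Md.mk.injEq]
    refine ⟨?_, rfl, rfl⟩
    rw [ZMod.natCast_eq_zero_iff, hn2]
  · rw [map_pow, FreeGroup.lift_apply_of, fmap1, Md.Y_pow]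
    rw [show (1 : MD n m) = ⟨0,0,0⟩ from rfl, Md.mk.injEq]
    refine ⟨rfl, ?_, rfl⟩
    rw [ZMod.natCast_eq_zero_iff, hm2]
  · rw [map_pow, FreeGroup.lift_apply_of, fmap2, Md.Z_pow]
    rw [show (1 : MD n m) = ⟨0,0,0⟩ from rfl, Md.mk.injEq]
    exact ⟨rfl, rfl, by decide⟩
  · rw [map_mul, map_mul, map_mul, map_inv, FreeGroup.lift_apply_of, FreeGroup.lift_apply_of, fmap0, fmap2]
    exact Md.rel4
  · rw [map_mul, map_mul, map_mul, map_inv, FreeGroup.lift_apply_of, FreeGroup.lift_apply_of, fmap1, fmap2]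
    exact Md.rel5

noncomputable def phi (hm : 2 < m) (hmn : m < n) : GG n m →* MD n m :=
  PresentedGroup.toGroup (relcheck n m hm hmn)

variable {n m}

theorem phi_x (hm : 2 < m) (hmn : m < n) : phi n m hm hmn (gx n m) = Md.X :=
  PresentedGroup.toGroup.of _
theorem phi_y (hm : 2 < m) (hmn : m < n) : phi n m hm hmn (gy n m) = Md.Y :=
  PresentedGroup.toGroup.of _
theorem phi_z (hm : 2 < m) (hmn : m < n) : phi n m hm hmn (gz n m) = Md.Z :=
  PresentedGroup.toGroup.of _

theorem phi_inj (hm : 2 < m) (hmn : m < n) : Function.Injective (phi n m hm hmn) := by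
  have hn2 : 4 * 2^(n-2) = 2^n := hN4 n (by omega)
  have hm2 : 4 * 2^(m-2) = 2^m := hN4 m (by omega)
  rw [injective_iff_map_eq_one]
  intro g hg
  obtain ⟨a, b, c, rfl⟩ := ggnf n m g
  rw [map_mul, map_mul, map_zpow, map_zpow, map_zpow, phi_x hm hmn, phi_y hm hmn, phi_z hm hmn,
    Md.X_zpow, Md.Y_zpow, Md.Z_zpow, Md.mk_abc,
    show (1 : MD n m) = ⟨0,0,0⟩ from rfl, Md.mk.injEq] at hg
  obtain ⟨ha, hb, hc⟩ := hg
  rw [ZMod.intCast_zmod_eq_zero_iff_dvd] at ha hb hc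
  have hxa : (gx n m)^a = 1 := by
    obtain ⟨t, rfl⟩ := ha
    rw [zpow_mul]
    rw [show ((4 * 2^(n-2) : ℕ) : ℤ) = ((2^n : ℕ) : ℤ) by rw [hn2]]
    rw [zpow_natCast, ggx2n, one_zpow]
  have hyb : (gy n m)^b = 1 := by
    obtain ⟨t, rfl⟩ := hb
    rw [zpow_mul]
    rw [show ((4 * 2^(m-2) : ℕ) : ℤ) = ((2^m : ℕ) : ℤ) by rw [hm2]]
    rw [zpow_natCast, ggy2m, one_zpow]
  have hzc : (gz n m)^c = 1 := by
    obtain ⟨t, rfl⟩ := hc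
    rw [zpow_mul, zpow_natCast, ggz4, one_zpow]
  rw [hxa, hyb, hzc, mul_one, mul_one]

/-- every element has order dividing 2^n -/
theorem gg_pow_eq_one (hm : 2 < m) (hmn : m < n) (g : GG n m) : g ^ (2^n) = 1 := by
  have hn2 : 4 * 2^(n-2) = 2^n := hN4 n (by omega : 2 ≤ n)
  have hm2 : 4 * 2^(m-2) = 2^m := hN4 m (by omega : 2 ≤ m)
  apply phi_inj hm hmn
  rw [map_pow, map_one]
  exact Md.pow_eq_one _ n (by omega : 3 ≤ n) (by rw [hn2]) (by rw [hm2]; exact pow_dvd_pow 2 hmn.le)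

end GGside

/-- In `G`, the element `x` has order exactly `2^n`, the element `y²`
has order at most `2^(n-2)`, and `(xy)² = x²y²z⁻¹`; consequently the exponent of the
centralizer `C_G(G')` is `2^n`. -/
theorem statement_8 (n m : ℕ) (hm : 2 < m) (hmn : m < n) :
    orderOf (gx n m) = 2 ^ n ∧
    orderOf (gy n m ^ 2) ≤ 2 ^ (n - 2) ∧
    (gx n m * gy n m) ^ 2 = gx n m ^ 2 * gy n m ^ 2 * (gz n m)⁻¹ ∧
    Monoid.exponent (Subgroup.centralizer (commutator (GG n m) : Set (GG n m))) =
      2 ^ n := by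
  have hn2 : 4 * 2^(n-2) = 2^n := hN4 n (by omega)
  -- Part 1 : order of x
  have p1 : orderOf (gx n m) = 2^n := by
    have hne : ¬ (gx n m)^(2^(n-1)) = 1 := by
      intro h
      have h2 := congrArg (phi n m hm hmn) h
      rw [map_pow, map_one, phi_x hm hmn, Md.X_pow,
        show (1 : MD n m) = ⟨0,0,0⟩ from rfl, Md.mk.injEq] at h2
      obtain ⟨ha, -, -⟩ := h2
      rw [ZMod.natCast_eq_zero_iff, hn2] at ha
      have := (Nat.pow_dvd_pow_iff_le_right one_lt_two).mp ha
      omega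
    have hone : (gx n m)^(2^(n-1+1)) = 1 := by
      rw [show n-1+1 = n by omega]; exact ggx2n n m
    have h := orderOf_eq_prime_pow hne hone
    rwa [show n-1+1 = n by omega] at h
  -- Part 2 : order of y^2
  have p2 : orderOf (gy n m ^ 2) ≤ 2^(n-2) := by
    have h : (gy n m ^ 2)^(2^(m-1)) = 1 := by
      rw [← pow_mul, show 2 * 2^(m-1) = 2^m by
        rw [← pow_succ']; congr 1; omega]
      exact ggy2m n m
    calc orderOf (gy n m ^ 2) ≤ 2^(m-1) :=
          Nat.le_of_dvd (by positivity) (orderOf_dvd_of_pow_eq_one h)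
    _ ≤ 2^(n-2) := Nat.pow_le_pow_right (by norm_num) (by omega)
  -- Part 3
  have p3 : (gx n m * gy n m)^2 = gx n m^2 * gy n m^2 * (gz n m)⁻¹ :=
    sq_xy (ggh1 n m) (ggh3 n m)
  refine ⟨p1, p2, p3, ?_⟩
  -- Part 4 : exponent of the centralizer of the derived subgroup
  have hmem : gx n m * gy n m ∈
      Subgroup.centralizer (commutator (GG n m) : Set (GG n m)) := by
    rw [Subgroup.mem_centralizer_iff]
    intro h hh
    apply phi_inj hm hmn
    have hK : (phi n m hm hmn h).a = 0 ∧ (phi n m hm hmn h).b = 0 := by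
      let Kc : Subgroup (MD n m) :=
        { carrier := {p | p.a = 0 ∧ p.b = 0}
          one_mem' := ⟨rfl, rfl⟩
          mul_mem' := by
            rintro p q ⟨hp1, hp2⟩ ⟨hq1, hq2⟩
            constructor
            · show (p * q).a = 0
              rw [Md.mul_def]
              show p.a + q.a = 0
              rw [hp1, hq1, add_zero]
            · show (p * q).b = 0
              rw [Md.mul_def]
              show p.b + q.b = 0
              rw [hp2, hq2, add_zero]
          inv_mem' := by
            rintro p ⟨hp1, hp2⟩
            constructor
            · show (p⁻¹).a = 0
              rw [Md.inv_def]
              show -p.a = 0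
              rw [hp1, neg_zero]
            · show (p⁻¹).b = 0
              rw [Md.inv_def]
              show -p.b = 0
              rw [hp2, neg_zero] }
      have hcm : commutator (MD n m) ≤ Kc := by
        rw [commutator_def, Subgroup.commutator_le]
        intro g1 _ g2 _
        exact Md.comm_ab g1 g2
      have hmap : phi n m hm hmn h ∈ commutator (MD n m) := by
        have h1 : phi n m hm hmn h ∈
            Subgroup.map (phi n m hm hmn) (commutator (GG n m)) :=
          Subgroup.mem_map_of_mem _ hh
        rw [commutator_def, Subgroup.map_commutator] at h1
        exact Subgroup.commutator_mono le_top le_top h1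
      exact hcm hmap
    simp only [map_mul]
    rw [phi_x hm hmn, phi_y hm hmn, Md.XY]
    exact Md.central_comm 0 _ hK.1 hK.2
  have hdvd1 : Monoid.exponent
      (Subgroup.centralizer (commutator (GG n m) : Set (GG n m))) ∣ 2^n := by
    apply Monoid.exponent_dvd_of_forall_pow_eq_one
    intro g
    have hg := gg_pow_eq_one hm hmn (g : GG n m)
    exact Subtype.ext (by rw [SubmonoidClass.coe_pow, OneMemClass.coe_one]; exact hg)
  have hxyord : orderOf (gx n m * gy n m) = 2^n := by
    have hne : ¬ (gx n m * gy n m)^(2^(n-1)) = 1 := by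
      intro h
      have h2 := congrArg (phi n m hm hmn) h
      rw [map_pow, map_one, map_mul, phi_x hm hmn, phi_y hm hmn, Md.XY] at h2
      have h3 := congrArg Md.a h2
      rw [Md.a_pow] at h3
      have h4 : ((2^(n-1) : ℕ) : ZMod (4 * 2^(n-2))) = 0 := by
        rw [← mul_one ((2^(n-1) : ℕ) : ZMod (4 * 2^(n-2)))]
        exact h3
      rw [ZMod.natCast_eq_zero_iff, hn2] at h4
      have := (Nat.pow_dvd_pow_iff_le_right one_lt_two).mp h4
      omega
    have hone : (gx n m * gy n m)^(2^(n-1+1)) = 1 := by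
      rw [show n-1+1 = n by omega]; exact gg_pow_eq_one hm hmn _
    have h := orderOf_eq_prime_pow hne hone
    rwa [show n-1+1 = n by omega] at h
  have hdvd2 : 2^n ∣ Monoid.exponent
      (Subgroup.centralizer (commutator (GG n m) : Set (GG n m))) := by
    have h := Monoid.order_dvd_exponent
      (⟨gx n m * gy n m, hmem⟩ :
        Subgroup.centralizer (commutator (GG n m) : Set (GG n m)))
    rwa [Subgroup.orderOf_mk, hxyord] at h
  exact Nat.dvd_antisymm hdvd1 hdvd2

end MIP
end

section
/- In the group algebra kH over the field with 2 elements, the augmentation ideal I is generated as a (non-unital) ring by the two elements a + 1 and ỹ + 1, where ỹ = b(a + b + ab)c. -/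
namespace MIP

/-- The group algebra of `H` over the field with 2 elements. -/
abbrev kH (n m : ℕ) := MonoidAlgebra (ZMod 2) (HH n m)

/-- The embedding of `H` into its group algebra over `𝔽₂`. -/
noncomputable def e (n m : ℕ) : HH n m →* kH n m := MonoidAlgebra.of (ZMod 2) (HH n m)

/-- The augmentation map `kH → k`, the `k`-algebra map sending every element of `H` to 1. -/
noncomputable def aug (n m : ℕ) : kH n m →ₐ[ZMod 2] ZMod 2 :=
  MonoidAlgebra.lift (ZMod 2) (ZMod 2) (HH n m) 1

/-- The augmentation ideal `I` of `kH`, as a `k`-submodule (it is a two-sided ideal). -/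
noncomputable def augIdeal (n m : ℕ) : Submodule (ZMod 2) (kH n m) :=
  LinearMap.ker (aug n m).toLinearMap

/-- The element `ỹ = b(a+b+ab)c` of `kH`. -/
noncomputable def yt (n m : ℕ) : kH n m :=
  e n m (hb n m) * (e n m (ha n m) + e n m (hb n m) + e n m (ha n m * hb n m)) *
    e n m (hc n m)



section Aux1
variable (n m : ℕ)

lemma mk_rel {r : FreeGroup (Fin 3)} (h : r ∈ hrels n m) : PresentedGroup.mk (hrels n m) r = 1 := by
  have : r ∈ Subgroup.normalClosure (hrels n m) := Subgroup.subset_normalClosure h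
  exact (QuotientGroup.eq_one_iff r).2 this

lemma rel1 : hc n m = (hb n m)⁻¹ * (ha n m)⁻¹ * hb n m * ha n m := by
  have h := mk_rel n m (show _ ∈ hrels n m by left; rfl)
  have h2 : (hc n m)⁻¹ * ((hb n m)⁻¹ * (ha n m)⁻¹ * hb n m * ha n m) = 1 := by
    simpa [ha, hb, hc, PresentedGroup.of, map_mul, map_inv] using h
  calc hc n m = hc n m * ((hc n m)⁻¹ * ((hb n m)⁻¹ * (ha n m)⁻¹ * hb n m * ha n m)) := by
        rw [h2, mul_one]
    _ = (hb n m)⁻¹ * (ha n m)⁻¹ * hb n m * ha n m := by group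

lemma rel2 : ha n m ^ (2^n) = 1 := by
  have h := mk_rel n m (show FreeGroup.of 0 ^ (2^n) ∈ hrels n m by right; left; rfl)
  simpa [ha, PresentedGroup.of, map_pow] using h

lemma rel3 : hb n m ^ (2^m) = 1 := by
  have h := mk_rel n m (show FreeGroup.of 1 ^ (2^m) ∈ hrels n m by right; right; left; rfl)
  simpa [hb, PresentedGroup.of, map_pow] using h

lemma rel4 : hc n m ^ 4 = 1 := by
  have h := mk_rel n m (show FreeGroup.of 2 ^ 4 ∈ hrels n m by right; right; right; left; rfl)
  simpa [hc, PresentedGroup.of, map_pow] using h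

lemma rel5 : (ha n m)⁻¹ * hc n m * ha n m = (hc n m)⁻¹ := by
  have h := mk_rel n m (show _ ∈ hrels n m by right; right; right; right; left; rfl)
  have h2 : (ha n m)⁻¹ * hc n m * ha n m * hc n m = 1 := by
    simpa [ha, hc, PresentedGroup.of, map_mul, map_inv] using h
  calc (ha n m)⁻¹ * hc n m * ha n m
      = ((ha n m)⁻¹ * hc n m * ha n m * hc n m) * (hc n m)⁻¹ := by group
    _ = (hc n m)⁻¹ := by rw [h2, one_mul]

lemma rel6 : (hb n m)⁻¹ * hc n m * hb n m = hc n m := by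
  have h := mk_rel n m (show _ ∈ hrels n m by right; right; right; right; right; rfl)
  have h2 : (hb n m)⁻¹ * hc n m * hb n m * (hc n m)⁻¹ = 1 := by
    simpa [hb, hc, PresentedGroup.of, map_mul, map_inv] using h
  calc (hb n m)⁻¹ * hc n m * hb n m
      = ((hb n m)⁻¹ * hc n m * hb n m * (hc n m)⁻¹) * hc n m := by group
    _ = hc n m := by rw [h2, one_mul]

lemma mem_of_gens (S : Subgroup (HH n m)) (hA : ha n m ∈ S) (hB : hb n m ∈ S) (hC : hc n m ∈ S)
    (x : HH n m) : x ∈ S := by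
  apply PresentedGroup.generated_by
  intro j
  fin_cases j
  · exact hA
  · exact hB
  · exact hC

lemma conj_c (h : HH n m) : h⁻¹ * hc n m * h = hc n m ∨ h⁻¹ * hc n m * h = (hc n m)⁻¹ := by
  let S : Subgroup (HH n m) :=
    { carrier := {h | h⁻¹ * hc n m * h = hc n m ∨ h⁻¹ * hc n m * h = (hc n m)⁻¹}
      one_mem' := by
        have : (1:HH n m)⁻¹ * hc n m * 1 = hc n m := by group
        exact Or.inl this
      mul_mem' := by
        intro g h hg hh
        have key : (g*h)⁻¹ * hc n m * (g*h) = h⁻¹ * (g⁻¹ * hc n m * g) * h := by group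
        have key2 : h⁻¹ * (hc n m)⁻¹ * h = (h⁻¹ * hc n m * h)⁻¹ := by group
        rcases hg with hg | hg <;> rcases hh with hh | hh
        · exact Or.inl (by rw [key, hg, hh])
        · exact Or.inr (by rw [key, hg, hh])
        · exact Or.inr (by rw [key, hg, key2, hh])
        · exact Or.inl (by rw [key, hg, key2, hh, inv_inv])
      inv_mem' := by
        intro g hg
        have h1 : g * (g⁻¹ * hc n m * g) * g⁻¹ = hc n m := by group
        rcases hg with hg | hg
        · rw [hg] at h1
          exact Or.inl (by rw [inv_inv]; exact h1)
        · rw [hg] at h1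
          refine Or.inr ?_
          rw [inv_inv]
          calc g * hc n m * g⁻¹ = (g * (hc n m)⁻¹ * g⁻¹)⁻¹ := by group
            _ = (hc n m)⁻¹ := by rw [h1] }
  have hA : ha n m ∈ S := Or.inr (rel5 n m)
  have hB : hb n m ∈ S := Or.inl (rel6 n m)
  have hC : hc n m ∈ S := Or.inl (by group)
  exact mem_of_gens n m S hA hB hC h

lemma c2_central (h : HH n m) : h⁻¹ * (hc n m * hc n m) * h = hc n m * hc n m := by
  have key : h⁻¹ * (hc n m * hc n m) * h = (h⁻¹ * hc n m * h) * (h⁻¹ * hc n m * h) := by group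
  rcases conj_c n m h with hh | hh
  · rw [key, hh]
  · rw [key, hh]
    have h4 : (hc n m * hc n m) * (hc n m * hc n m) = 1 := by
      have := rel4 n m
      calc (hc n m * hc n m) * (hc n m * hc n m) = hc n m ^ 4 := by
            rw [show (4:ℕ) = 2+2 from rfl, pow_add, pow_two]
        _ = 1 := this
    calc (hc n m)⁻¹ * (hc n m)⁻¹ = (hc n m * hc n m)⁻¹ := by group
      _ = hc n m * hc n m := by rw [inv_eq_iff_mul_eq_one]; exact h4

lemma conj_mem_closure_c (h x : HH n m) (hx : x ∈ Subgroup.closure {hc n m}) :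
    h⁻¹ * x * h ∈ Subgroup.closure {hc n m} := by
  induction hx using Subgroup.closure_induction with
  | mem y hy =>
      rcases hy with rfl
      rcases conj_c n m h with hh | hh <;> rw [hh]
      · exact Subgroup.subset_closure rfl
      · exact inv_mem (Subgroup.subset_closure rfl)
  | one => rw [mul_one, inv_mul_cancel]; exact one_mem _
  | mul y z _ _ hy hz =>
      have : h⁻¹ * (y * z) * h = (h⁻¹ * y * h) * (h⁻¹ * z * h) := by group
      rw [this]; exact mul_mem hy hz
  | inv y _ hy =>
      have : h⁻¹ * y⁻¹ * h = (h⁻¹ * y * h)⁻¹ := by group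
      rw [this]; exact inv_mem hy

lemma conj_b (h : HH n m) :
    (hb n m)⁻¹ * (h⁻¹ * hb n m * h) ∈ Subgroup.closure {hc n m} := by
  let S : Subgroup (HH n m) :=
    { carrier := {h | (hb n m)⁻¹ * (h⁻¹ * hb n m * h) ∈ Subgroup.closure {hc n m}}
      one_mem' := by
        have key : (hb n m)⁻¹ * ((1:HH n m)⁻¹ * hb n m * 1) = 1 := by group
        show (hb n m)⁻¹ * ((1:HH n m)⁻¹ * hb n m * 1) ∈ Subgroup.closure {hc n m}
        rw [key]; exact one_mem _
      mul_mem' := by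
        intro g h hg hh
        have key : (hb n m)⁻¹ * ((g*h)⁻¹ * hb n m * (g*h)) =
            ((hb n m)⁻¹ * (h⁻¹ * hb n m * h)) *
              (h⁻¹ * ((hb n m)⁻¹ * (g⁻¹ * hb n m * g)) * h) := by group
        show (hb n m)⁻¹ * ((g*h)⁻¹ * hb n m * (g*h)) ∈ Subgroup.closure {hc n m}
        rw [key]
        exact mul_mem hh (conj_mem_closure_c n m h _ hg)
      inv_mem' := by
        intro g hg
        have key : (hb n m)⁻¹ * ((g⁻¹)⁻¹ * hb n m * g⁻¹) =
            (g⁻¹)⁻¹ * ((hb n m)⁻¹ * (g⁻¹ * hb n m * g))⁻¹ * g⁻¹ := by group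
        show (hb n m)⁻¹ * ((g⁻¹)⁻¹ * hb n m * g⁻¹) ∈ Subgroup.closure {hc n m}
        rw [key]
        exact conj_mem_closure_c n m g⁻¹ _ (inv_mem hg) }
  have hA : ha n m ∈ S := by
    have key : (hb n m)⁻¹ * ((ha n m)⁻¹ * hb n m * ha n m) = hc n m := by
      rw [rel1 n m]; group
    show (hb n m)⁻¹ * ((ha n m)⁻¹ * hb n m * ha n m) ∈ Subgroup.closure {hc n m}
    rw [key]; exact Subgroup.subset_closure rfl
  have hB : hb n m ∈ S := by
    have key : (hb n m)⁻¹ * ((hb n m)⁻¹ * hb n m * hb n m) = 1 := by group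
    show (hb n m)⁻¹ * ((hb n m)⁻¹ * hb n m * hb n m) ∈ Subgroup.closure {hc n m}
    rw [key]; exact one_mem _
  have hC : hc n m ∈ S := by
    have hcomm : hc n m * hb n m = hb n m * hc n m := by
      conv_lhs => rw [show hc n m * hb n m = hb n m * ((hb n m)⁻¹ * hc n m * hb n m) from by group]
      rw [rel6]
    have key : (hb n m)⁻¹ * ((hc n m)⁻¹ * hb n m * hc n m) = 1 := by
      rw [show (hc n m)⁻¹ * hb n m * hc n m = (hc n m)⁻¹ * (hb n m * hc n m) from by group,
        ← hcomm]
      group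
    show (hb n m)⁻¹ * ((hc n m)⁻¹ * hb n m * hc n m) ∈ Subgroup.closure {hc n m}
    rw [key]; exact one_mem _
  exact mem_of_gens n m S hA hB hC h

lemma conj_a (h : HH n m) :
    (ha n m)⁻¹ * (h⁻¹ * ha n m * h) ∈ Subgroup.closure {hc n m} := by
  let S : Subgroup (HH n m) :=
    { carrier := {h | (ha n m)⁻¹ * (h⁻¹ * ha n m * h) ∈ Subgroup.closure {hc n m}}
      one_mem' := by
        have key : (ha n m)⁻¹ * ((1:HH n m)⁻¹ * ha n m * 1) = 1 := by group
        show (ha n m)⁻¹ * ((1:HH n m)⁻¹ * ha n m * 1) ∈ Subgroup.closure {hc n m}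
        rw [key]; exact one_mem _
      mul_mem' := by
        intro g h hg hh
        have key : (ha n m)⁻¹ * ((g*h)⁻¹ * ha n m * (g*h)) =
            ((ha n m)⁻¹ * (h⁻¹ * ha n m * h)) *
              (h⁻¹ * ((ha n m)⁻¹ * (g⁻¹ * ha n m * g)) * h) := by group
        show (ha n m)⁻¹ * ((g*h)⁻¹ * ha n m * (g*h)) ∈ Subgroup.closure {hc n m}
        rw [key]
        exact mul_mem hh (conj_mem_closure_c n m h _ hg)
      inv_mem' := by
        intro g hg
        have key : (ha n m)⁻¹ * ((g⁻¹)⁻¹ * ha n m * g⁻¹) =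
            (g⁻¹)⁻¹ * ((ha n m)⁻¹ * (g⁻¹ * ha n m * g))⁻¹ * g⁻¹ := by group
        show (ha n m)⁻¹ * ((g⁻¹)⁻¹ * ha n m * g⁻¹) ∈ Subgroup.closure {hc n m}
        rw [key]
        exact conj_mem_closure_c n m g⁻¹ _ (inv_mem hg) }
  have hA : ha n m ∈ S := by
    have key : (ha n m)⁻¹ * ((ha n m)⁻¹ * ha n m * ha n m) = 1 := by group
    show (ha n m)⁻¹ * ((ha n m)⁻¹ * ha n m * ha n m) ∈ Subgroup.closure {hc n m}
    rw [key]; exact one_mem _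
  have hB : hb n m ∈ S := by
    have key : (ha n m)⁻¹ * ((hb n m)⁻¹ * ha n m * hb n m) = (hc n m)⁻¹ := by
      rw [rel1 n m]; group
    show (ha n m)⁻¹ * ((hb n m)⁻¹ * ha n m * hb n m) ∈ Subgroup.closure {hc n m}
    rw [key]; exact inv_mem (Subgroup.subset_closure rfl)
  have hC : hc n m ∈ S := by
    have h5 : (ha n m)⁻¹ * (hc n m)⁻¹ * ha n m = hc n m := by
      have := rel5 n m
      calc (ha n m)⁻¹ * (hc n m)⁻¹ * ha n m
          = ((ha n m)⁻¹ * hc n m * ha n m)⁻¹ := by group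
        _ = ((hc n m)⁻¹)⁻¹ := by rw [this]
        _ = hc n m := by group
    have key : (ha n m)⁻¹ * ((hc n m)⁻¹ * ha n m * hc n m) =
        (ha n m)⁻¹ * (hc n m)⁻¹ * ha n m * hc n m := by group
    show (ha n m)⁻¹ * ((hc n m)⁻¹ * ha n m * hc n m) ∈ Subgroup.closure {hc n m}
    rw [key, h5]
    exact mul_mem (Subgroup.subset_closure rfl) (Subgroup.subset_closure rfl)
  exact mem_of_gens n m S hA hB hC h

/-- u g = g + 1 -/
noncomputable def uu (g : HH n m) : kH n m := e n m g + 1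

lemma two_nsmul_zero (x : kH n m) : (2:ℕ) • x = 0 := by
  have h1 : (2:ℕ) • x = ((2:ℕ) : ZMod 2) • x := (Nat.cast_smul_eq_nsmul _ _ _).symm
  rw [h1, show ((2:ℕ) : ZMod 2) = 0 by decide, zero_smul]

lemma add_self (x : kH n m) : x + x = 0 := by
  have := two_nsmul_zero n m x
  rwa [two_nsmul] at this

lemma neg_eq_self (x : kH n m) : -x = x := neg_eq_of_add_eq_zero_left (add_self n m x)

lemma two_eq_zero : (2 : kH n m) = 0 := by
  have := add_self n m 1
  rwa [one_add_one_eq_two] at this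

lemma three_eq_one : (3 : kH n m) = 1 := by
  have : (3 : kH n m) = 2 + 1 := by norm_num
  rw [this, two_eq_zero, zero_add]

lemma zsmul2 (x : kH n m) : (2:ℤ) • x = 0 := by
  rw [show ((2:ℤ) • x) = x + x from two_zsmul x, add_self]

lemma zsmul3 (x : kH n m) : (3:ℤ) • x = x := by
  rw [show (3:ℤ) = 2 + 1 by norm_num, add_zsmul, zsmul2, one_zsmul, zero_add]

lemma zsmul4 (x : kH n m) : (4:ℤ) • x = 0 := by
  rw [show (4:ℤ) = 2 + 2 by norm_num, add_zsmul, zsmul2, zero_add]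

lemma id_u_mul (g h : HH n m) : uu n m (g*h) = uu n m g * e n m h + uu n m h := by
  simp only [uu, map_mul, add_mul, one_mul]
  abel_nf
  try simp only [zsmul2, zsmul3, zsmul4, zero_add, add_zero, smul_zero]
  try abel

lemma id_u_mul' (g h : HH n m) :
    uu n m (g*h) = uu n m g * uu n m h + uu n m g + uu n m h := by
  simp only [uu, map_mul, add_mul, mul_add, one_mul, mul_one]
  abel_nf
  try simp only [zsmul2, zsmul3, zsmul4, zero_add, add_zero, smul_zero]
  try abel

lemma id_u_sq (g : HH n m) : uu n m g * uu n m g = uu n m (g*g) := by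
  simp only [uu, map_mul, add_mul, mul_add, one_mul, mul_one]
  abel_nf
  try simp only [zsmul2, zsmul3, zsmul4, zero_add, add_zero, smul_zero]
  try abel

lemma id_u_inv (g : HH n m) : uu n m g⁻¹ = e n m g⁻¹ * uu n m g := by
  simp only [uu, mul_add, mul_one, ← map_mul, inv_mul_cancel, map_one]
  abel

lemma id_u_inv2 (g : HH n m) :
    uu n m g⁻¹ = uu n m g + e n m g⁻¹ * (uu n m g * uu n m g) := by
  simp only [uu, mul_add, mul_one, add_mul, one_mul, ← map_mul, inv_mul_cancel, map_one,
    inv_mul_cancel_left]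
  abel_nf
  try simp only [zsmul2, zsmul3, zsmul4, zero_add, add_zero, smul_zero]
  try abel

lemma id_cross (g h : HH n m) :
    uu n m g * e n m h + e n m h * uu n m g = e n m (g*h) + e n m (h*g) := by
  simp only [uu, map_mul, add_mul, mul_add, one_mul, mul_one]
  abel_nf
  try simp only [zsmul2, zsmul3, zsmul4, zero_add, add_zero, smul_zero]
  try abel

lemma id_conj (g h : HH n m) :
    e n m (g*h) + e n m (h*g) = e n m (h*g) * uu n m (g⁻¹ * (h⁻¹ * g * h)) := by
  rw [uu, mul_add, mul_one, ← map_mul]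
  have : h * g * (g⁻¹ * (h⁻¹ * g * h)) = g * h := by group
  rw [this, add_comm]

lemma id_cmt (g h : HH n m) :
    uu n m (g⁻¹ * h⁻¹ * g * h) =
      e n m (g⁻¹ * h⁻¹) * (uu n m g * uu n m h + uu n m h * uu n m g) := by
  have h1 : uu n m g * uu n m h + uu n m h * uu n m g = e n m (g*h) + e n m (h*g) := by
    simp only [uu, map_mul, add_mul, mul_add, one_mul, mul_one]
    abel_nf
    try simp only [zsmul2, zsmul3, zsmul4, zero_add, add_zero, smul_zero]
    try abel
  rw [h1, mul_add, ← map_mul, ← map_mul]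
  have h2 : g⁻¹ * h⁻¹ * (g * h) = g⁻¹ * h⁻¹ * g * h := by group
  have h3 : g⁻¹ * h⁻¹ * (h * g) = 1 := by group
  rw [h2, h3, map_one, uu]

lemma aug_e (g : HH n m) : aug n m (e n m g) = 1 := by
  simp [aug, e, MonoidAlgebra.lift_of]

lemma uu_mem_I (g : HH n m) : uu n m g ∈ augIdeal n m := by
  simp only [augIdeal, LinearMap.mem_ker, AlgHom.toLinearMap_apply, uu, map_add, map_one, aug_e]
  decide

lemma I_left_mul (r x : kH n m) (hx : x ∈ augIdeal n m) : r * x ∈ augIdeal n m := by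
  simp only [augIdeal, LinearMap.mem_ker, AlgHom.toLinearMap_apply] at *
  rw [map_mul, hx, mul_zero]

lemma I_right_mul (r x : kH n m) (hx : x ∈ augIdeal n m) : x * r ∈ augIdeal n m := by
  simp only [augIdeal, LinearMap.mem_ker, AlgHom.toLinearMap_apply] at *
  rw [map_mul, hx, zero_mul]

lemma span_range_e : Submodule.span (ZMod 2) (Set.range (e n m)) = ⊤ := by
  rw [eq_top_iff]
  rintro x -
  induction x using MonoidAlgebra.induction_on with
  | of g => exact Submodule.subset_span ⟨g, rfl⟩
  | add f g hf hg => exact Submodule.add_mem _ hf hg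
  | smul r f hf => exact Submodule.smul_mem _ r hf

lemma I_le_span_uu :
    augIdeal n m ≤ Submodule.span (ZMod 2) {x | ∃ g, x = uu n m g} := by
  intro x hx
  have key : ∀ y : kH n m,
      y - aug n m y • 1 ∈ Submodule.span (ZMod 2) {x | ∃ g, x = uu n m g} := by
    intro y
    induction y using MonoidAlgebra.induction_on with
    | of g =>
        show e n m g - aug n m (e n m g) • 1 ∈ _
        have : (e n m g : kH n m) - aug n m (e n m g) • 1 = uu n m g := by
          rw [aug_e, one_smul, uu, sub_eq_add_neg, neg_eq_self]
        rw [this]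
        exact Submodule.subset_span ⟨g, rfl⟩
    | add f g hf hg =>
        have : f + g - aug n m (f + g) • 1 =
            (f - aug n m f • 1) + (g - aug n m g • 1) := by
          rw [map_add, add_smul]; abel
        rw [this]; exact Submodule.add_mem _ hf hg
    | smul r f hf =>
        have : r • f - aug n m (r • f) • 1 = r • (f - aug n m f • 1) := by
          rw [map_smul, smul_sub, smul_assoc]
        rw [this]; exact Submodule.smul_mem _ r hf
  have hx0 : aug n m x = 0 := hx
  have := key x
  rwa [hx0, zero_smul, sub_zero] at this

end Aux1

section Aux2

variable {n m : ℕ}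

/-- two-sided ideal generated by a set, as a submodule -/
noncomputable def tid (n m : ℕ) (S : Set (kH n m)) : Submodule (ZMod 2) (kH n m) :=
  Submodule.span (ZMod 2) {w | ∃ x z y, z ∈ S ∧ w = x * z * y}

lemma mem_tid {S : Set (kH n m)} {z : kH n m} (hz : z ∈ S) : z ∈ tid n m S :=
  Submodule.subset_span ⟨1, z, 1, hz, by rw [one_mul, mul_one]⟩

lemma tid_left_mul {S : Set (kH n m)} (r : kH n m) {w : kH n m} (hw : w ∈ tid n m S) :
    r * w ∈ tid n m S := by
  induction hw using Submodule.span_induction with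
  | mem p hp =>
      obtain ⟨x, z, y, hz, rfl⟩ := hp
      exact Submodule.subset_span ⟨r * x, z, y, hz, by rw [mul_assoc, mul_assoc, mul_assoc]⟩
  | zero => rw [mul_zero]; exact Submodule.zero_mem _
  | add p q _ _ hp hq => rw [mul_add]; exact Submodule.add_mem _ hp hq
  | smul t p _ hp => rw [mul_smul_comm]; exact Submodule.smul_mem _ t hp

lemma tid_right_mul {S : Set (kH n m)} (r : kH n m) {w : kH n m} (hw : w ∈ tid n m S) :
    w * r ∈ tid n m S := by
  induction hw using Submodule.span_induction with
  | mem p hp =>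
      obtain ⟨x, z, y, hz, rfl⟩ := hp
      exact Submodule.subset_span ⟨x, z, y * r, hz, by rw [← mul_assoc]⟩
  | zero => rw [zero_mul]; exact Submodule.zero_mem _
  | add p q _ _ hp hq => rw [add_mul]; exact Submodule.add_mem _ hp hq
  | smul t p _ hp => rw [smul_mul_assoc]; exact Submodule.smul_mem _ t hp

lemma tid_le {S : Set (kH n m)} {A : Submodule (ZMod 2) (kH n m)}
    (hl : ∀ r x : kH n m, x ∈ A → r * x ∈ A) (hr : ∀ r x : kH n m, x ∈ A → x * r ∈ A)
    (hS : ∀ z ∈ S, z ∈ A) : tid n m S ≤ A := by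
  rw [tid, Submodule.span_le]
  rintro w ⟨x, z, y, hz, rfl⟩
  exact hr y _ (hl x z (hS z hz))

lemma tid_mono {S T : Set (kH n m)} (h : S ⊆ T) : tid n m S ≤ tid n m T := by
  apply Submodule.span_mono
  rintro w ⟨x, z, y, hz, rfl⟩
  exact ⟨x, z, y, h hz, rfl⟩

lemma tid_union {S T : Set (kH n m)} : tid n m (S ∪ T) = tid n m S ⊔ tid n m T := by
  apply le_antisymm
  · rw [tid, Submodule.span_le]
    rintro w ⟨x, z, y, hz | hz, rfl⟩
    · have : x * z * y ∈ tid n m S := Submodule.subset_span ⟨x, z, y, hz, rfl⟩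
      exact Submodule.mem_sup_left this
    · have : x * z * y ∈ tid n m T := Submodule.subset_span ⟨x, z, y, hz, rfl⟩
      exact Submodule.mem_sup_right this
  · exact sup_le (tid_mono Set.subset_union_left) (tid_mono Set.subset_union_right)

lemma mul_le_of_left {A : Submodule (ZMod 2) (kH n m)}
    (hl : ∀ r x : kH n m, x ∈ A → r * x ∈ A) (X : Submodule (ZMod 2) (kH n m)) :
    X * A ≤ A :=
  Submodule.mul_le.2 fun x _ a ha => hl x a ha

lemma mul_le_of_right {A : Submodule (ZMod 2) (kH n m)}
    (hr : ∀ r x : kH n m, x ∈ A → x * r ∈ A) (X : Submodule (ZMod 2) (kH n m)) :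
    A * X ≤ A :=
  Submodule.mul_le.2 fun a ha x _ => hr x a ha

lemma pow_mono {X Y : Submodule (ZMod 2) (kH n m)} (h : X ≤ Y) (q : ℕ) : X^q ≤ Y^q := by
  induction q with
  | zero => simp
  | succ q ih => rw [pow_succ, pow_succ]; exact mul_le_mul' ih h



lemma tid_singleton_pow_le (A : Submodule (ZMod 2) (kH n m))
    (hl : ∀ r x : kH n m, x ∈ A → r * x ∈ A) (hr : ∀ r x : kH n m, x ∈ A → x * r ∈ A)
    (z : kH n m) (hcen : ∀ r : kH n m, z * r + r * z ∈ A) :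
    ∀ j, 1 ≤ j → tid n m {z} ^ j ≤ A ⊔ tid n m {z ^ j} := by
  refine Nat.le_induction ?_ ?_
  · rw [pow_one, pow_one]
    exact le_sup_right
  · intro j hj ih
    rw [pow_succ]
    refine le_trans (mul_le_mul_left ih _) ?_
    rw [Submodule.sup_mul]
    apply sup_le
    · exact le_trans (mul_le_of_right hr _) le_sup_left
    · -- tid {z^j} * tid {z} ≤ A ⊔ tid {z^(j+1)}
      rw [tid, tid, Submodule.span_mul_span, Submodule.span_le]
      rintro w ⟨p, ⟨x, zj, y, hzj, rfl⟩, q, ⟨x', z', y', hz', rfl⟩, rfl⟩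
      rw [Set.mem_singleton_iff] at hzj hz'
      beta_reduce
      rw [hzj, hz']
      have e1 : x * z^j * (z * (y*x') + (y*x') * z) * y' =
          x * (z^j * z) * ((y*x') * y') + x * z^j * y * (x' * z * y') := by
        noncomm_ring
      have e2 : x * z ^ j * y * (x' * z * y') =
          x * z^j * (z * (y*x') + (y*x') * z) * y' + x * (z^j * z) * ((y*x') * y') := by
        rw [e1]
        rw [show ∀ a b : kH n m, a + b + a = b by
          intro a b; rw [add_comm a b, add_assoc, add_self, add_zero]]
      rw [e2]
      apply Submodule.add_mem
      · exact Submodule.mem_sup_left (hr y' _ (hl (x * z^j) _ (hcen (y*x'))))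
      · refine Submodule.mem_sup_right (Submodule.subset_span ?_)
        exact ⟨x, z^(j+1), (y*x')*y', rfl, by rw [pow_succ]⟩

lemma sup_pow_le (A T : Submodule (ZMod 2) (kH n m))
    (hl : ∀ r x : kH n m, x ∈ A → r * x ∈ A) (hr : ∀ r x : kH n m, x ∈ A → x * r ∈ A) :
    ∀ q, 1 ≤ q → (A ⊔ T) ^ q ≤ A ⊔ T ^ q := by
  refine Nat.le_induction ?_ ?_
  · rw [pow_one, pow_one]
  · intro q hq ih
    rw [pow_succ]
    refine le_trans (mul_le_mul_left ih _) ?_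
    rw [Submodule.sup_mul, Submodule.mul_sup, Submodule.mul_sup]
    apply sup_le
    · apply sup_le
      · exact le_trans (mul_le_of_right hr _) le_sup_left
      · exact le_trans (mul_le_of_right hr _) le_sup_left
    · apply sup_le
      · exact le_trans (mul_le_of_left hl _) le_sup_left
      · rw [← pow_succ]
        exact le_sup_right

set_option maxHeartbeats 2000000 in
lemma step_lemma (A : Submodule (ZMod 2) (kH n m))
    (hl : ∀ r x : kH n m, x ∈ A → r * x ∈ A) (hr : ∀ r x : kH n m, x ∈ A → x * r ∈ A)
    (z : kH n m) (hcen : ∀ r : kH n m, z * r + r * z ∈ A)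
    (q : ℕ) (hq : 1 ≤ q) (hzq : z ^ q ∈ A)
    (s : ℕ) (hs : augIdeal n m ^ s ≤ A ⊔ tid n m {z}) :
    augIdeal n m ^ (s * q) ≤ A := by
  rw [pow_mul]
  refine le_trans (pow_mono hs q) ?_
  refine le_trans (sup_pow_le A (tid n m {z}) hl hr q hq) ?_
  apply sup_le le_rfl
  refine le_trans (tid_singleton_pow_le A hl hr z hcen q hq) ?_
  apply sup_le le_rfl
  exact tid_le hl hr (by rintro w rfl; exact hzq)
end Aux2

section Aux3

variable (n m : ℕ)

lemma uu_one : uu n m 1 = 0 := by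
  rw [uu, map_one, add_self]

/-- the set of `g` with `uu g ∈ A` is a subgroup, for a two-sided-ideal-like `A` -/
noncomputable def DD (A : Submodule (ZMod 2) (kH n m))
    (hl : ∀ r x : kH n m, x ∈ A → r * x ∈ A) (hr : ∀ r x : kH n m, x ∈ A → x * r ∈ A) :
    Subgroup (HH n m) where
  carrier := {g | uu n m g ∈ A}
  one_mem' := by
    show uu n m 1 ∈ A
    rw [uu_one]; exact A.zero_mem
  mul_mem' := by
    intro g h hg hh
    show uu n m (g * h) ∈ A
    rw [id_u_mul]
    exact A.add_mem (hr _ _ hg) hh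
  inv_mem' := by
    intro g hg
    show uu n m g⁻¹ ∈ A
    rw [id_u_inv]
    exact hl _ _ hg

lemma cen_of_gen (A : Submodule (ZMod 2) (kH n m)) (z : kH n m)
    (hgen : ∀ h : HH n m, z * e n m h + e n m h * z ∈ A) :
    ∀ r : kH n m, z * r + r * z ∈ A := by
  intro r
  let L : kH n m →ₗ[ZMod 2] kH n m :=
    LinearMap.mulLeft (ZMod 2) z + LinearMap.mulRight (ZMod 2) z
  have hle : Submodule.span (ZMod 2) (Set.range (e n m)) ≤ Submodule.comap L A := by
    rw [Submodule.span_le]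
    rintro _ ⟨h, rfl⟩
    exact hgen h
  have : r ∈ Submodule.comap L A := hle (by rw [span_range_e]; trivial)
  simpa [L, LinearMap.mulLeft_apply, LinearMap.mulRight_apply] using this

lemma cross_formula (g h : HH n m) :
    uu n m g * e n m h + e n m h * uu n m g =
      e n m (h * g) * uu n m (g⁻¹ * (h⁻¹ * g * h)) := by
  rw [id_cross, id_conj]

lemma u_pow_sq (g : HH n m) (j : ℕ) : uu n m g ^ (2 ^ j) = uu n m (g ^ (2 ^ j)) := by
  induction j with
  | zero => rw [pow_zero, pow_one, pow_one]
  | succ j ih =>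
      have h1 : (2:ℕ) ^ (j+1) = 2 ^ j * 2 := by ring
      rw [h1, pow_mul, pow_mul, ih, sq, sq, id_u_sq]

lemma cen_c2 (r : kH n m) :
    uu n m (hc n m * hc n m) * r + r * uu n m (hc n m * hc n m) ∈
      (⊥ : Submodule (ZMod 2) (kH n m)) := by
  refine cen_of_gen n m _ _ ?_ r
  intro h
  rw [id_cross]
  have hcen := c2_central n m h
  have : hc n m * hc n m * h = h * (hc n m * hc n m) := by
    calc hc n m * hc n m * h = h * (h⁻¹ * (hc n m * hc n m) * h) := by group
      _ = h * (hc n m * hc n m) := by rw [hcen]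
  rw [this, add_self]
  exact Submodule.zero_mem _

lemma cen_c (r : kH n m) :
    uu n m (hc n m) * r + r * uu n m (hc n m) ∈ tid n m {uu n m (hc n m * hc n m)} := by
  refine cen_of_gen n m _ _ ?_ r
  intro h
  rw [cross_formula]
  rcases conj_c n m h with hh | hh
  · rw [hh, inv_mul_cancel, uu_one, mul_zero]
    exact Submodule.zero_mem _
  · rw [hh, show (hc n m)⁻¹ * (hc n m)⁻¹ = (hc n m * hc n m)⁻¹ by rw [mul_inv_rev], id_u_inv]
    exact tid_left_mul _ (tid_left_mul _ (mem_tid rfl))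

lemma uu_mem_tid_closure_c (g : HH n m) (hg : g ∈ Subgroup.closure {hc n m}) :
    uu n m g ∈ tid n m {uu n m (hc n m)} := by
  have hle : Subgroup.closure {hc n m} ≤
      DD n m (tid n m {uu n m (hc n m)}) (fun r x hx => tid_left_mul r hx)
        (fun r x hx => tid_right_mul r hx) := by
    rw [Subgroup.closure_le]
    rintro _ rfl
    exact mem_tid rfl
  exact hle hg

lemma cen_b (r : kH n m) :
    uu n m (hb n m) * r + r * uu n m (hb n m) ∈ tid n m {uu n m (hc n m)} := by
  refine cen_of_gen n m _ _ ?_ r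
  intro h
  rw [cross_formula]
  exact tid_left_mul _ (uu_mem_tid_closure_c n m _ (conj_b n m h))

lemma cen_a (r : kH n m) :
    uu n m (ha n m) * r + r * uu n m (ha n m) ∈
      tid n m ({uu n m (hc n m)} ∪ {uu n m (hb n m)}) := by
  refine cen_of_gen n m _ _ ?_ r
  intro h
  rw [cross_formula]
  exact tid_left_mul _
    (tid_mono Set.subset_union_left (uu_mem_tid_closure_c n m _ (conj_a n m h)))

lemma uu_mem_tid_all (g : HH n m) :
    uu n m g ∈ tid n m (({uu n m (hc n m)} ∪ {uu n m (hb n m)}) ∪ {uu n m (ha n m)}) := by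
  have := mem_of_gens n m
    (DD n m (tid n m (({uu n m (hc n m)} ∪ {uu n m (hb n m)}) ∪ {uu n m (ha n m)}))
      (fun r x hx => tid_left_mul r hx) (fun r x hx => tid_right_mul r hx))
    (mem_tid (Or.inr rfl)) (mem_tid (Or.inl (Or.inr rfl))) (mem_tid (Or.inl (Or.inl rfl))) g
  exact this

lemma I_le_A4 :
    augIdeal n m ≤
      tid n m (({uu n m (hc n m)} ∪ {uu n m (hb n m)}) ∪ {uu n m (ha n m)}) := by
  refine le_trans (I_le_span_uu n m) ?_
  rw [Submodule.span_le]
  rintro x ⟨g, rfl⟩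
  exact uu_mem_tid_all n m g

lemma I_pow_bot :
    augIdeal n m ^ ((((1 * 2^n) * 2^m) * 2) * 2) ≤ (⊥ : Submodule (ZMod 2) (kH n m)) := by
  have st1 : augIdeal n m ^ (1 * 2^n) ≤ tid n m ({uu n m (hc n m)} ∪ {uu n m (hb n m)}) := by
    refine step_lemma _ (fun r x hx => tid_left_mul r hx) (fun r x hx => tid_right_mul r hx)
      (uu n m (ha n m)) (cen_a n m) (2^n) Nat.one_le_two_pow ?_ 1 ?_
    · rw [u_pow_sq, rel2, uu_one]; exact Submodule.zero_mem _
    · rw [pow_one, ← tid_union]; exact I_le_A4 n m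
  have st2 : augIdeal n m ^ ((1 * 2^n) * 2^m) ≤ tid n m {uu n m (hc n m)} := by
    refine step_lemma _ (fun r x hx => tid_left_mul r hx) (fun r x hx => tid_right_mul r hx)
      (uu n m (hb n m)) (cen_b n m) (2^m) Nat.one_le_two_pow ?_ (1 * 2^n) ?_
    · rw [u_pow_sq, rel3, uu_one]; exact Submodule.zero_mem _
    · rw [← tid_union]; exact st1
  have st3 : augIdeal n m ^ (((1 * 2^n) * 2^m) * 2) ≤
      tid n m {uu n m (hc n m * hc n m)} := by
    refine step_lemma _ (fun r x hx => tid_left_mul r hx) (fun r x hx => tid_right_mul r hx)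
      (uu n m (hc n m)) (cen_c n m) 2 one_le_two ?_ ((1 * 2^n) * 2^m) ?_
    · rw [sq, id_u_sq]; exact mem_tid rfl
    · exact le_trans st2 le_sup_right
  refine step_lemma _ (by simp) (by simp)
    (uu n m (hc n m * hc n m)) (cen_c2 n m) 2 one_le_two ?_ (((1 * 2^n) * 2^m) * 2) ?_
  · rw [sq, id_u_sq, show (hc n m * hc n m) * (hc n m * hc n m) = hc n m ^ 4 by
      rw [show (4:ℕ) = 2*2 from rfl, pow_mul, sq, sq], rel4, uu_one]
    exact Submodule.zero_mem _
  · exact le_trans st3 le_sup_right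



lemma zmod2_cases (r : ZMod 2) : r = 0 ∨ r = 1 := by fin_cases r <;> [left; right] <;> rfl

/-- the closure of `{a+1, ỹ+1}` as a submodule -/
noncomputable def Jmod : Submodule (ZMod 2) (kH n m) where
  carrier := (NonUnitalSubring.closure {e n m (ha n m) + 1, yt n m + 1} : Set (kH n m))
  add_mem' := fun hx hy => add_mem hx hy
  zero_mem' := zero_mem _
  smul_mem' := by
    intro r x hx
    rcases zmod2_cases r with rfl | rfl
    · rw [zero_smul]; exact zero_mem _
    · rw [one_smul]; exact hx

lemma mem_Jmod_iff (x : kH n m) :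
    x ∈ Jmod n m ↔ x ∈ NonUnitalSubring.closure {e n m (ha n m) + 1, yt n m + 1} :=
  Iff.rfl

lemma Jmod_mul_le : Jmod n m * Jmod n m ≤ Jmod n m :=
  Submodule.mul_le.2 fun x hx y hy =>
    (mem_Jmod_iff n m _).2 (mul_mem ((mem_Jmod_iff n m x).1 hx) ((mem_Jmod_iff n m y).1 hy))

lemma yt_add_one_mem_I : yt n m + 1 ∈ augIdeal n m := by
  have : aug n m (yt n m + 1) = 0 := by
    rw [yt, map_add, map_mul, map_mul, map_add, map_add, map_one, aug_e, aug_e, aug_e, aug_e]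
    decide
  exact this

lemma Jmod_le_I : Jmod n m ≤ augIdeal n m := by
  intro x hx
  have hx' : x ∈ NonUnitalSubring.closure {e n m (ha n m) + 1, yt n m + 1} := hx
  let NI : NonUnitalSubring (kH n m) :=
    { carrier := augIdeal n m
      add_mem' := fun hx hy => (augIdeal n m).add_mem hx hy
      zero_mem' := (augIdeal n m).zero_mem
      mul_mem' := fun {x y} hx hy => I_left_mul n m x y hy
      neg_mem' := fun {x} hx => by rw [MIP.neg_eq_self]; exact hx }
  have hle : NonUnitalSubring.closure {e n m (ha n m) + 1, yt n m + 1} ≤ NI := by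
    rw [NonUnitalSubring.closure_le]
    rintro z (rfl | rfl)
    · exact uu_mem_I n m (ha n m)
    · exact yt_add_one_mem_I n m
  exact hle hx'

lemma uu_mul_uu_mem_I2 (g h : HH n m) : uu n m g * uu n m h ∈ augIdeal n m ^ 2 := by
  rw [pow_two]
  exact Submodule.mul_mem_mul (uu_mem_I n m g) (uu_mem_I n m h)

lemma I2_left (r x : kH n m) (hx : x ∈ augIdeal n m ^ 2) : r * x ∈ augIdeal n m ^ 2 := by
  rw [pow_two] at hx ⊢
  refine Submodule.mul_induction_on
    (C := fun t => r * t ∈ augIdeal n m * augIdeal n m) hx ?_ ?_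
  · intro a ha' b hb'
    rw [← mul_assoc]
    exact Submodule.mul_mem_mul (I_left_mul n m r a ha') hb'
  · intro x y hx hy
    rw [mul_add]; exact Submodule.add_mem _ hx hy

lemma I2_right (r x : kH n m) (hx : x ∈ augIdeal n m ^ 2) : x * r ∈ augIdeal n m ^ 2 := by
  rw [pow_two] at hx ⊢
  refine Submodule.mul_induction_on
    (C := fun t => t * r ∈ augIdeal n m * augIdeal n m) hx ?_ ?_
  · intro a ha' b hb'
    rw [mul_assoc]
    exact Submodule.mul_mem_mul ha' (I_right_mul n m r b hb')
  · intro x y hx hy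
    rw [add_mul]; exact Submodule.add_mem _ hx hy

lemma uc_mem_I2 : uu n m (hc n m) ∈ augIdeal n m ^ 2 := by
  have h1 := id_cmt n m (hb n m) (ha n m)
  rw [← rel1] at h1
  rw [h1]
  refine I2_left n m _ _ (Submodule.add_mem _ ?_ ?_)
  · exact uu_mul_uu_mem_I2 n m _ _
  · exact uu_mul_uu_mem_I2 n m _ _

lemma id_b :
    uu n m (hb n m) = (yt n m + 1) +
      (e n m (hb n m) * (uu n m (ha n m) * uu n m (hb n m)) * e n m (hc n m) +
        e n m (hb n m) * uu n m (hc n m)) := by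
  simp only [uu, yt, map_mul, mul_add, add_mul, one_mul, mul_one]
  abel_nf
  try simp only [zsmul2, zsmul3, zsmul4, zero_add, add_zero, smul_zero]
  try abel

lemma I_le_J_sup_I2 : augIdeal n m ≤ Jmod n m ⊔ augIdeal n m ^ 2 := by
  let Sg : Subgroup (HH n m) :=
    { carrier := {g | uu n m g ∈ Jmod n m ⊔ augIdeal n m ^ 2}
      one_mem' := by
        show uu n m 1 ∈ Jmod n m ⊔ augIdeal n m ^ 2
        rw [uu_one]; exact Submodule.zero_mem _
      mul_mem' := by
        intro g h hg hh
        show uu n m (g * h) ∈ Jmod n m ⊔ augIdeal n m ^ 2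
        rw [id_u_mul']
        exact Submodule.add_mem _ (Submodule.add_mem _
          (Submodule.mem_sup_right (uu_mul_uu_mem_I2 n m g h)) hg) hh
      inv_mem' := by
        intro g hg
        show uu n m g⁻¹ ∈ Jmod n m ⊔ augIdeal n m ^ 2
        rw [id_u_inv2]
        exact Submodule.add_mem _ hg
          (Submodule.mem_sup_right (I2_left n m _ _ (uu_mul_uu_mem_I2 n m g g))) }
  have hA : ha n m ∈ Sg := by
    show uu n m (ha n m) ∈ Jmod n m ⊔ augIdeal n m ^ 2
    exact Submodule.mem_sup_left (NonUnitalSubring.subset_closure (Or.inl rfl))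
  have hB : hb n m ∈ Sg := by
    show uu n m (hb n m) ∈ Jmod n m ⊔ augIdeal n m ^ 2
    rw [id_b]
    refine Submodule.add_mem _
      (Submodule.mem_sup_left (NonUnitalSubring.subset_closure (Or.inr rfl))) ?_
    refine Submodule.mem_sup_right (Submodule.add_mem _ ?_ ?_)
    · exact I2_right n m _ _ (I2_left n m _ _ (uu_mul_uu_mem_I2 n m _ _))
    · exact I2_left n m _ _ (uc_mem_I2 n m)
  have hC : hc n m ∈ Sg := by
    rw [rel1]
    exact Subgroup.mul_mem _ (Subgroup.mul_mem _
      (Subgroup.mul_mem _ (Subgroup.inv_mem _ hB) (Subgroup.inv_mem _ hA)) hB) hA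
  refine le_trans (I_le_span_uu n m) ?_
  rw [Submodule.span_le]
  rintro x ⟨g, rfl⟩
  exact mem_of_gens n m Sg hA hB hC g

lemma I_pow_succ_le : ∀ j, 1 ≤ j →
    augIdeal n m ^ (j + 1) ≤ augIdeal n m ^ j := by
  refine Nat.le_induction ?_ ?_
  · rw [pow_one, pow_two]
    exact mul_le_of_right (fun r x hx => I_right_mul n m r x hx) _
  · intro j hj ih
    rw [pow_succ, pow_succ]
    exact mul_le_mul_left ih _

set_option maxHeartbeats 1000000 in
lemma claimC : ∀ k, 1 ≤ k → (Jmod n m ⊔ augIdeal n m ^ 2) ^ k ≤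
    (Jmod n m ⊓ augIdeal n m ^ k) ⊔ augIdeal n m ^ (k + 1) := by
  refine Nat.le_induction ?_ ?_
  · rw [pow_one, pow_one]
    apply sup_le
    · refine le_trans ?_ le_sup_left
      exact le_inf le_rfl (Jmod_le_I n m)
    · exact le_sup_right
  · intro k hk ih
    rw [pow_succ]
    refine le_trans (mul_le_mul_left ih _) ?_
    rw [Submodule.sup_mul, Submodule.mul_sup, Submodule.mul_sup]
    have hJI : Jmod n m ≤ augIdeal n m := Jmod_le_I n m
    apply sup_le
    · apply sup_le
      · -- (J ⊓ I^k) * J ≤ J ⊓ I^(k+1)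
        refine le_trans ?_ le_sup_left
        apply le_inf
        · exact le_trans (mul_le_mul' inf_le_left le_rfl) (Jmod_mul_le n m)
        · refine le_trans (mul_le_mul' inf_le_right hJI) ?_
          exact le_of_eq (pow_succ _ _).symm
      · -- (J ⊓ I^k) * I^2 ≤ I^(k+2)
        refine le_trans (mul_le_mul' inf_le_right le_rfl) ?_
        exact le_trans (le_of_eq (pow_add (augIdeal n m) k 2).symm) le_sup_right
    · apply sup_le
      · -- I^(k+1) * J ≤ I^(k+2)
        refine le_trans (mul_le_mul' le_rfl hJI) ?_
        exact le_trans (le_of_eq (pow_succ (augIdeal n m) (k+1)).symm) le_sup_right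
      · -- I^(k+1) * I^2 ≤ I^(k+2)
        have h34 : augIdeal n m ^ (k+1+2) ≤ augIdeal n m ^ (k+2) := by
          rw [show k+1+2 = (k+2)+1 by omega]
          exact I_pow_succ_le n m (k+2) (by omega)
        exact le_trans (le_of_eq (pow_add (augIdeal n m) (k+1) 2).symm)
          (le_trans h34 le_sup_right)

lemma claimE : ∀ k, 1 ≤ k →
    augIdeal n m ^ k ≤ Jmod n m ⊔ augIdeal n m ^ (k + 1) := by
  intro k hk
  refine le_trans (pow_mono (I_le_J_sup_I2 n m) k) ?_
  refine le_trans (claimC n m k hk) ?_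
  exact sup_le (le_trans inf_le_left le_sup_left) le_sup_right

lemma claimF : ∀ d, augIdeal n m ≤ Jmod n m ⊔ augIdeal n m ^ (1 + d) := by
  intro d
  induction d with
  | zero => rw [pow_one]; exact le_sup_right
  | succ d ih =>
      refine le_trans ih ?_
      apply sup_le le_sup_left
      refine le_trans (claimE n m (1+d) (by omega)) ?_
      rw [show 1 + d + 1 = 1 + (d+1) by omega]

lemma I_le_Jmod : augIdeal n m ≤ Jmod n m := by
  set N := (((1 * 2^n) * 2^m) * 2) * 2 with hN
  have hN1 : 1 ≤ N := by
    have h1 : 1 ≤ 2^n := Nat.one_le_two_pow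
    have h2 : 1 ≤ 2^m := Nat.one_le_two_pow
    calc 1 = (((1*1)*1)*1)*1 := by norm_num
      _ ≤ N := by rw [hN]; gcongr <;> omega
  obtain ⟨d, hd⟩ : ∃ d, N = 1 + d := ⟨N - 1, by omega⟩
  have hbot : augIdeal n m ^ N = ⊥ := le_bot_iff.mp (hd ▸ hd ▸ I_pow_bot n m)
  have := claimF n m d
  rw [← hd, hbot, sup_bot_eq] at this
  exact this

end Aux3

/-- In the group algebra `kH` over the field with 2 elements, the
augmentation ideal `I` is generated as a (non-unital) ring by the two elements
`a + 1` and `ỹ + 1`, where `ỹ = b(a+b+ab)c`. -/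
theorem statement_12 (n m : ℕ) (hm : 2 < m) (hmn : m < n) :
    (NonUnitalSubring.closure {e n m (ha n m) + 1, yt n m + 1} :
        Set (kH n m)) =
      (augIdeal n m : Set (kH n m)) := by
  apply Set.Subset.antisymm
  · intro x hx
    exact Jmod_le_I n m hx
  · intro x hx
    exact I_le_Jmod n m hx

end MIP
end
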